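/- arXiv:2209.09077 — 6 statements merged into one kernel-verified Lean document; each statement's English description precedes it below -/
import Mathlib

section
/- Under the MES sampling setup, the expected welfare of the multinomial empirical success rule satisfies U_{M*} − Σ_{k=1}^{K} exp(−2·Δ_{M*k}² / (A_k + A_{M*}))·Δ_{M*k} ≤ u ≤ U_{M*}. -/
open MeasureTheory ProbabilityTheory Finset

lemma hoeff_key {p : ℝ} (hp0 : 0 ≤ p) (hp1 : p ≤ 1) (h : ℝ) :
    (1 - p) * Real.exp (-p * h) + p * Real.exp ((1 - p) * h) ≤ Real.exp (h ^ 2 / 8) := by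
  set D : ℝ → ℝ := fun x => 1 - p + p * Real.exp x with hDdef
  have hD : ∀ x, 0 < D x := by
    intro x
    rcases eq_or_lt_of_le hp0 with h0 | h0
    · simp [hDdef, ← h0]
    · have := mul_pos h0 (Real.exp_pos x)
      simp only [hDdef]; linarith
  set q : ℝ → ℝ := fun x => p * Real.exp x / D x with hqdef
  have hD' : ∀ x, HasDerivAt D (p * Real.exp x) x := by
    intro x
    exact ((Real.hasDerivAt_exp x).const_mul p).const_add (1 - p)
  have hq0 : ∀ x, 0 ≤ q x := fun x =>
    div_nonneg (mul_nonneg hp0 (Real.exp_pos x).le) (hD x).le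
  have hq1 : ∀ x, q x ≤ 1 := by
    intro x
    rw [hqdef, div_le_one (hD x)]
    simp only [hDdef]; linarith [mul_nonneg hp0 (Real.exp_pos x).le]
  -- φ := derivative of ψ
  set φ : ℝ → ℝ := fun x => q x - p with hφdef
  have hφ' : ∀ x, HasDerivAt φ (q x * (1 - q x)) x := by
    intro x
    have h1 : HasDerivAt (fun x => p * Real.exp x) (p * Real.exp x) x :=
      (Real.hasDerivAt_exp x).const_mul p
    have h2 : HasDerivAt q ((p * Real.exp x * D x - p * Real.exp x * (p * Real.exp x)) / D x ^ 2) x :=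
      h1.div (hD' x) (hD x).ne'
    have heq : ∀ (E d : ℝ), d ≠ 0 → (E * d - E * E) / d ^ 2 = (E / d) * (1 - E / d) := by
      intro E d hd; field_simp
    have h3 := h2.sub_const p
    rw [heq _ _ (hD x).ne'] at h3
    exact h3
  have hqc : Continuous q := by
    apply Continuous.div (continuous_const.mul Real.continuous_exp)
    · exact continuous_const.add (continuous_const.mul Real.continuous_exp)
    · exact fun x => (hD x).ne'
  have hφc : Continuous φ := hqc.sub continuous_const
  have hψ''c : Continuous fun x => q x * (1 - q x) :=
    hqc.mul (continuous_const.sub hqc)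
  have hφ0 : φ 0 = 0 := by simp [hφdef, hqdef, hDdef]
  -- FTC for φ
  have hφint : ∀ x : ℝ, φ x = ∫ t in (0:ℝ)..x, q t * (1 - q t) := by
    intro x
    rw [intervalIntegral.integral_eq_sub_of_hasDerivAt (fun t _ => hφ' t)
      (hψ''c.intervalIntegrable 0 x), hφ0, sub_zero]
  have hψ''le : ∀ t : ℝ, q t * (1 - q t) ≤ 1 / 4 := by
    intro t; nlinarith [hq0 t, hq1 t, sq_nonneg (q t - 1/2)]
  have hψ''ge : ∀ t : ℝ, 0 ≤ q t * (1 - q t) := by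
    intro t; nlinarith [hq0 t, hq1 t]
  -- bounds on φ
  have hφle : ∀ x : ℝ, 0 ≤ x → φ x ≤ x / 4 := by
    intro x hx
    rw [hφint x]
    calc ∫ t in (0:ℝ)..x, q t * (1 - q t) ≤ ∫ _t in (0:ℝ)..x, (1:ℝ)/4 := by
          apply intervalIntegral.integral_mono_on hx (hψ''c.intervalIntegrable 0 x)
            (intervalIntegrable_const)
          exact fun t _ => hψ''le t
      _ = x / 4 := by simp [mul_comm]; ring
  have hφge : ∀ x : ℝ, x ≤ 0 → x / 4 ≤ φ x := by
    intro x hx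
    rw [hφint x, intervalIntegral.integral_symm x 0]
    have : ∫ t in x..(0:ℝ), q t * (1 - q t) ≤ ∫ _t in x..(0:ℝ), (1:ℝ)/4 := by
      apply intervalIntegral.integral_mono_on hx (hψ''c.intervalIntegrable x 0)
        (intervalIntegrable_const)
      exact fun t _ => hψ''le t
    have h2 : (∫ _t in x..(0:ℝ), (1:ℝ)/4) = -x/4 := by simp; ring
    linarith [this, h2 ▸ this]
  -- ψ and its FTC
  set ψ : ℝ → ℝ := fun x => Real.log (D x) - p * x with hψdef
  have hψ' : ∀ x, HasDerivAt ψ (φ x) x := by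
    intro x
    have h1 : HasDerivAt (fun x => Real.log (D x)) (p * Real.exp x / D x) x :=
      (hD' x).log (hD x).ne'
    have h2 : HasDerivAt (fun x : ℝ => p * x) p x := by
      simpa using (hasDerivAt_id x).const_mul p
    exact h1.sub h2
  have hψ0 : ψ 0 = 0 := by simp [hψdef, hDdef]
  have hψint : ∀ x : ℝ, ψ x = ∫ t in (0:ℝ)..x, φ t := by
    intro x
    rw [intervalIntegral.integral_eq_sub_of_hasDerivAt (fun t _ => hψ' t)
      (hφc.intervalIntegrable 0 x), hψ0, sub_zero]
  have hψle : ∀ x : ℝ, ψ x ≤ x ^ 2 / 8 := by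
    intro x
    rcases le_total 0 x with hx | hx
    · rw [hψint x]
      calc ∫ t in (0:ℝ)..x, φ t ≤ ∫ t in (0:ℝ)..x, t / 4 := by
            apply intervalIntegral.integral_mono_on hx (hφc.intervalIntegrable 0 x)
              ((continuous_id.div_const 4).intervalIntegrable 0 x)
            exact fun t ht => hφle t ht.1
        _ = x ^ 2 / 8 := by
            rw [intervalIntegral.integral_div, integral_id]; ring
    · rw [hψint x, intervalIntegral.integral_symm x 0]
      have h1 : ∫ t in x..(0:ℝ), t / 4 ≤ ∫ t in x..(0:ℝ), φ t := by
        apply intervalIntegral.integral_mono_on hx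
          ((continuous_id.div_const 4).intervalIntegrable x 0)
          (hφc.intervalIntegrable x 0)
        exact fun t ht => hφge t ht.2
      have h2 : (∫ t in x..(0:ℝ), t / 4) = -x^2/8 := by
        rw [intervalIntegral.integral_div, integral_id]; ring
      rw [h2] at h1
      linarith
  -- conclude
  have hlog : Real.log (D h) ≤ p * h + h ^ 2 / 8 := by
    have := hψle h
    simp only [hψdef] at this
    linarith
  have hDle : D h ≤ Real.exp (p * h + h ^ 2 / 8) := by
    rw [← Real.exp_log (hD h)]
    exact Real.exp_le_exp.2 hlog
  have key : (1 - p) * Real.exp (-p * h) + p * Real.exp ((1 - p) * h)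
      = Real.exp (-p * h) * D h := by
    simp only [hDdef]
    rw [show (1 - p) * h = h + (-p * h) by ring, Real.exp_add]
    ring
  rw [key]
  calc Real.exp (-p * h) * D h ≤ Real.exp (-p * h) * Real.exp (p * h + h ^ 2 / 8) :=
        mul_le_mul_of_nonneg_left hDle (Real.exp_pos _).le
    _ = Real.exp (h ^ 2 / 8) := by rw [← Real.exp_add]; ring_nf

lemma hoeff_mgf {Ω : Type*} [MeasurableSpace Ω] {P : Measure Ω} [IsProbabilityMeasure P]
    {X : Ω → ℝ} (hX : Measurable X) {a b : ℝ} (ha : a ≤ 0) (hb : 0 ≤ b)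
    (hab : ∀ ω, X ω ∈ Set.Icc a b) (hmean : ∫ ω, X ω ∂P = 0) (t : ℝ) :
    mgf X P t ≤ Real.exp (t ^ 2 * (b - a) ^ 2 / 8) := by
  rcases eq_or_lt_of_le (ha.trans hb) with hab0 | hlt
  · -- a = b, so a = 0 = b and X ≡ 0
    have ha0 : a = 0 := le_antisymm ha (by rw [hab0]; exact hb)
    have hb0 : b = 0 := by rw [← hab0]; exact ha0
    have hX0 : ∀ ω, X ω = 0 := fun ω =>
      le_antisymm ((hab ω).2.trans_eq hb0) (ha0 ▸ (hab ω).1)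
    have : (fun ω => Real.exp (t * X ω)) = fun _ => (1 : ℝ) :=
      funext fun ω => by rw [hX0 ω]; simp
    rw [mgf, this, integral_const]
    simp only [measure_univ, probReal_univ, ENNReal.toReal_one, smul_eq_mul, one_mul]
    calc (1:ℝ) = Real.exp 0 := by simp
      _ ≤ _ := Real.exp_le_exp.2 (by positivity)
  · have hba : 0 < b - a := sub_pos.2 hlt
    set p : ℝ := -a / (b - a) with hpdef
    have hp0 : 0 ≤ p := div_nonneg (neg_nonneg.2 ha) hba.le
    have hp1 : p ≤ 1 := by rw [hpdef, div_le_one hba]; linarith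
    -- pointwise convexity bound
    have hpt : ∀ ω, Real.exp (t * X ω) ≤
        (b - X ω) / (b - a) * Real.exp (t * a) + (X ω - a) / (b - a) * Real.exp (t * b) := by
      intro ω
      obtain ⟨hxa, hxb⟩ := hab ω
      have hθ0 : 0 ≤ (b - X ω) / (b - a) := div_nonneg (by linarith) hba.le
      have hθ0' : 0 ≤ (X ω - a) / (b - a) := div_nonneg (by linarith) hba.le
      have hθ1 : (b - X ω) / (b - a) + (X ω - a) / (b - a) = 1 := by
        field_simp
        ring
      have := convexOn_exp.2 (Set.mem_univ (t * a)) (Set.mem_univ (t * b)) hθ0 hθ0' hθ1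
      simp only [smul_eq_mul] at this
      have harg : (b - X ω) / (b - a) * (t * a) + (X ω - a) / (b - a) * (t * b) = t * X ω := by
        field_simp
        ring
      rwa [harg] at this
    -- integrability
    have hXint : Integrable X P := by
      apply (integrable_const (max |a| |b|)).mono' (hX.aestronglyMeasurable)
      filter_upwards with ω
      obtain ⟨hxa, hxb⟩ := hab ω
      rw [Real.norm_eq_abs, abs_le]
      constructor
      · calc -max |a| |b| ≤ -|a| := by simp
          _ ≤ a := neg_abs_le a
          _ ≤ X ω := hxa
      · exact hxb.trans ((le_abs_self b).trans (le_max_right _ _))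
    have hexpint : Integrable (fun ω => Real.exp (t * X ω)) P := by
      apply (integrable_const (Real.exp (max (t * a) (t * b)))).mono'
        ((hX.const_mul t).exp.aestronglyMeasurable)
      filter_upwards with ω
      rw [Real.norm_eq_abs, abs_of_pos (Real.exp_pos _), Real.exp_le_exp]
      obtain ⟨hxa, hxb⟩ := hab ω
      rcases le_total 0 t with ht | ht
      · exact le_max_of_le_right (by nlinarith)
      · exact le_max_of_le_left (by nlinarith)
    -- integrate the pointwise bound
    have hint : mgf X P t ≤ (b - 0) / (b - a) * Real.exp (t * a)
        + (0 - a) / (b - a) * Real.exp (t * b) := by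
      have hrhs : Integrable (fun ω => (b - X ω) / (b - a) * Real.exp (t * a)
          + (X ω - a) / (b - a) * Real.exp (t * b)) P := by
        apply Integrable.add
        · exact (((integrable_const b).sub hXint).div_const _).mul_const _
        · exact ((hXint.sub (integrable_const a)).div_const _).mul_const _
      have hmono := integral_mono hexpint hrhs hpt
      rw [mgf]
      refine hmono.trans (le_of_eq ?_)
      have hrew : (fun ω => (b - X ω) / (b - a) * Real.exp (t * a)
          + (X ω - a) / (b - a) * Real.exp (t * b))
          = fun ω => (b / (b - a) * Real.exp (t * a) - a / (b - a) * Real.exp (t * b))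
            + (Real.exp (t * b) / (b - a) - Real.exp (t * a) / (b - a)) * X ω := by
        funext ω; field_simp; ring
      rw [hrew, integral_add (integrable_const _) (hXint.const_mul _),
        integral_const_mul, hmean, integral_const]
      simp only [measure_univ, probReal_univ, ENNReal.toReal_one, smul_eq_mul, one_mul, mul_zero, add_zero]
      ring
    -- identify with hoeff_key
    set h : ℝ := t * (b - a) with hhdef
    have h1 : (b - 0) / (b - a) = 1 - p := by rw [hpdef]; field_simp; ring
    have h2 : (0 - a) / (b - a) = p := by rw [hpdef]; ring_nf
    have h3 : t * a = -p * h := by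
      rw [hpdef, hhdef]; field_simp; try ring
    have h4 : t * b = (1 - p) * h := by
      rw [hpdef, hhdef]; field_simp; try ring
    rw [h1, h2, h3, h4] at hint
    refine hint.trans ((hoeff_key hp0 hp1 h).trans (le_of_eq ?_))
    rw [hhdef]; ring_nf

lemma hoeff_sum {Ω : Type*} [MeasurableSpace Ω] {P : Measure Ω} [IsProbabilityMeasure P]
    {ι : Type*} (s : Finset ι) (X : ι → Ω → ℝ)
    (hindep : iIndepFun (m := fun _ => inferInstance) X P)
    (hmeas : ∀ i, Measurable (X i))
    (a b m : ι → ℝ)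
    (hab : ∀ i ∈ s, ∀ ω, X i ω ∈ Set.Icc (a i) (b i))
    (hm : ∀ i ∈ s, ∫ ω, X i ω ∂P = m i)
    (ham : ∀ i ∈ s, a i ≤ m i) (hmb : ∀ i ∈ s, m i ≤ b i)
    {ε : ℝ} (hε : 0 < ε) {c : ℝ} (hc : c = ∑ i ∈ s, (b i - a i) ^ 2) (hcpos : 0 < c) :
    (P {ω | ε ≤ ∑ i ∈ s, X i ω - ∑ i ∈ s, m i}).toReal ≤ Real.exp (-2 * ε ^ 2 / c) := by
  classical
  set X' : ι → Ω → ℝ := fun i ω => X i ω - m i with hX'def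
  have hmeas' : ∀ i, Measurable (X' i) := fun i => (hmeas i).sub measurable_const
  have hindep' : iIndepFun (m := fun _ => inferInstance) X' P := by
    have := hindep.comp (fun i (x : ℝ) => x - m i) (fun i => measurable_id.sub measurable_const)
    exact this
  set t : ℝ := 4 * ε / c with htdef
  have ht : 0 < t := by positivity
  -- per-variable bounds and integrability
  have hbd : ∀ i ∈ s, ∀ ω, X' i ω ∈ Set.Icc (a i - m i) (b i - m i) := by
    intro i hi ω
    obtain ⟨h1, h2⟩ := hab i hi ω
    exact ⟨by simp [hX'def]; linarith, by simp [hX'def]; linarith⟩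
  have hmean' : ∀ i ∈ s, ∫ ω, X' i ω ∂P = 0 := by
    intro i hi
    have hint : Integrable (X i) P := by
      apply (integrable_const (max |a i| |b i|)).mono' (hmeas i).aestronglyMeasurable
      filter_upwards with ω
      obtain ⟨h1, h2⟩ := hab i hi ω
      rw [Real.norm_eq_abs, abs_le]
      exact ⟨by calc -max |a i| |b i| ≤ -|a i| := by simp
                _ ≤ a i := neg_abs_le _
                _ ≤ X i ω := h1,
             h2.trans ((le_abs_self _).trans (le_max_right _ _))⟩
    simp only [hX'def]
    rw [integral_sub hint (integrable_const _), hm i hi, integral_const]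
    simp
  have hexpint : ∀ i ∈ s, Integrable (fun ω => Real.exp (t * X' i ω)) P := by
    intro i hi
    apply (integrable_const (Real.exp (t * max |a i - m i| |b i - m i|))).mono'
      (((hmeas' i).const_mul t).exp.aestronglyMeasurable)
    filter_upwards with ω
    rw [Real.norm_eq_abs, abs_of_pos (Real.exp_pos _), Real.exp_le_exp]
    obtain ⟨h1, h2⟩ := hbd i hi ω
    have : X' i ω ≤ max |a i - m i| |b i - m i| :=
      h2.trans ((le_abs_self _).trans (le_max_right _ _))
    nlinarith
  -- mgf bound for the sum
  have hmgf : mgf (∑ i ∈ s, X' i) P t ≤ Real.exp (t ^ 2 * c / 8) := by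
    rw [hindep'.mgf_sum hmeas' s]
    have hle : ∀ i ∈ s, mgf (X' i) P t ≤ Real.exp (t ^ 2 * (b i - a i) ^ 2 / 8) := by
      intro i hi
      have := hoeff_mgf (hmeas' i) (by linarith [ham i hi] : a i - m i ≤ 0)
        (by linarith [hmb i hi] : 0 ≤ b i - m i) (hbd i hi) (hmean' i hi) t
      simpa using this
    calc ∏ i ∈ s, mgf (X' i) P t ≤ ∏ i ∈ s, Real.exp (t ^ 2 * (b i - a i) ^ 2 / 8) :=
          Finset.prod_le_prod (fun i _ => mgf_nonneg) hle
      _ = Real.exp (∑ i ∈ s, t ^ 2 * (b i - a i) ^ 2 / 8) := by rw [Real.exp_sum]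
      _ = Real.exp (t ^ 2 * c / 8) := by
          rw [hc, Finset.mul_sum, Finset.sum_div]
  -- Chernoff
  have hsumint : Integrable (fun ω => Real.exp (t * (∑ i ∈ s, X' i) ω)) P :=
    hindep'.integrable_exp_mul_sum hmeas' hexpint
  have hch := measure_ge_le_exp_mul_mgf (μ := P) (X := ∑ i ∈ s, X' i) ε ht.le hsumint
  have hset : {ω | ε ≤ (∑ i ∈ s, X' i) ω} = {ω | ε ≤ ∑ i ∈ s, X i ω - ∑ i ∈ s, m i} := by
    ext ω
    simp only [Set.mem_setOf_eq, Finset.sum_apply, hX'def, Finset.sum_sub_distrib]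
  rw [hset] at hch
  refine hch.trans ?_
  calc Real.exp (-t * ε) * mgf (∑ i ∈ s, X' i) P t
      ≤ Real.exp (-t * ε) * Real.exp (t ^ 2 * c / 8) :=
        mul_le_mul_of_nonneg_left hmgf (Real.exp_pos _).le
    _ = Real.exp (-t * ε + t ^ 2 * c / 8) := by rw [← Real.exp_add]
    _ = Real.exp (-2 * ε ^ 2 / c) := by
        congr 1
        rw [htdef]
        field_simp
        ring

/-- Under the MES sampling setup, the expected welfare of the multinomial
empirical success rule satisfies
`U_{M*} − Σ_k exp(−2·Δ_{M*k}² / (A_k + A_{M*}))·Δ_{M*k} ≤ u ≤ U_{M*}`. -/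
theorem mes_expected_welfare_bounds
    {Ω : Type*} [MeasurableSpace Ω] (P : Measure Ω) [IsProbabilityMeasure P]
    (K : ℕ) (hK : 1 ≤ K)
    (π : Fin K → ℝ) (hπ : ∀ k, π k ∈ Set.Icc (0 : ℝ) 1)
    (N : Fin K → Fin 2 → ℕ) (hN : ∀ k t, 1 ≤ N k t)
    (Y : Fin K → Fin 2 → ℕ → Ω → ℝ)
    (hmeas : ∀ k t i, Measurable (Y k t i))
    (hrange : ∀ k t i ω, Y k t i ω ∈ Set.Icc (0 : ℝ) 1)
    (μ : Fin K → Fin 2 → ℝ)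
    (hmean : ∀ k t i, ∫ ω, Y k t i ω ∂P = μ k t)
    (hident : ∀ k t i j, P.map (Y k t i) = P.map (Y k t j))
    (hindep : iIndepFun (m := fun _ => inferInstance)
      (fun p : Fin K × Fin 2 × ℕ => Y p.1 p.2.1 p.2.2) P)
    (Uhat : Fin K → Ω → ℝ)
    (hUhat : ∀ k ω, Uhat k ω
      = (1 - π k) * ((N k 0 : ℝ)⁻¹ * ∑ i ∈ Finset.range (N k 0), Y k 0 i ω)
        + π k * ((N k 1 : ℝ)⁻¹ * ∑ i ∈ Finset.range (N k 1), Y k 1 i ω))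
    (U : Fin K → ℝ)
    (hU : ∀ k, U k = (1 - π k) * μ k 0 + π k * μ k 1)
    (A : Fin K → ℝ)
    (hA : ∀ k, A k = (1 - π k) ^ 2 / (N k 0 : ℝ) + (π k) ^ 2 / (N k 1 : ℝ))
    (u : ℝ)
    (hu : u = ∑ k, (P {ω | ∀ j, j ≠ k → Uhat j ω < Uhat k ω}).toReal * U k)
    (hties : ∀ j k, j ≠ k → P {ω | Uhat j ω = Uhat k ω} = 0)
    (M : Fin K) (hM : ∀ k, U k ≤ U M) :
    U M - ∑ k, Real.exp (-2 * (U M - U k) ^ 2 / (A k + A M)) * (U M - U k) ≤ u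
      ∧ u ≤ U M := by
  classical
  haveI : Nonempty (Fin K) := ⟨⟨0, by omega⟩⟩
  set E : Fin K → Set Ω := fun k => {ω | ∀ j, j ≠ k → Uhat j ω < Uhat k ω} with hEdef
  set p : Fin K → ℝ := fun k => (P (E k)).toReal with hpdef
  -- measurability of Uhat
  have hUhatmeas : ∀ j, Measurable (Uhat j) := by
    intro j
    have : Uhat j = fun ω =>
        (1 - π j) * ((N j 0 : ℝ)⁻¹ * ∑ i ∈ Finset.range (N j 0), Y j 0 i ω)
        + π j * ((N j 1 : ℝ)⁻¹ * ∑ i ∈ Finset.range (N j 1), Y j 1 i ω) :=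
      funext (hUhat j)
    rw [this]
    apply Measurable.add <;>
      exact (Finset.measurable_sum _ (fun i _ => hmeas _ _ _)).const_mul _ |>.const_mul _
  have hEmeas : ∀ k, MeasurableSet (E k) := by
    intro k
    have : E k = ⋂ j, ⋂ (_ : j ≠ k), {ω | Uhat j ω < Uhat k ω} := by
      ext ω; simp [hEdef]
    rw [this]
    exact MeasurableSet.iInter fun j => MeasurableSet.iInter fun _ =>
      measurableSet_lt (hUhatmeas j) (hUhatmeas k)
  -- the probabilities sum to 1
  have hp0 : ∀ k, 0 ≤ p k := fun k => ENNReal.toReal_nonneg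
  have hsum1 : ∑ k, p k = 1 := by
    have hdisj : Pairwise (Function.onFun Disjoint E) := by
      intro i j hij
      refine Set.disjoint_left.2 fun ω hi hj => ?_
      exact lt_asymm (hi j (Ne.symm hij)) (hj i hij)
    have hcompl : P ((⋃ k, E k)ᶜ) = 0 := by
      have hsub : (⋃ k, E k)ᶜ ⊆ ⋃ (i) (j) (_ : i ≠ j), {ω | Uhat i ω = Uhat j ω} := by
        intro ω hω
        simp only [Set.mem_compl_iff, Set.mem_iUnion, not_exists] at hω
        obtain ⟨j₀, hj₀⟩ := Finite.exists_max fun i => Uhat i ω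
        have hnot : ω ∉ E j₀ := hω j₀
        simp only [hEdef, Set.mem_setOf_eq, not_forall] at hnot
        obtain ⟨i, hi, hile⟩ := hnot
        have : Uhat i ω = Uhat j₀ ω := le_antisymm (hj₀ i) (not_lt.1 hile)
        exact Set.mem_iUnion.2 ⟨i, Set.mem_iUnion.2 ⟨j₀, Set.mem_iUnion.2 ⟨hi, this⟩⟩⟩
      exact measure_mono_null hsub (measure_iUnion_null fun i =>
        measure_iUnion_null fun j => measure_iUnion_null fun hij => hties i j hij)
    have hunion : P (⋃ k, E k) = 1 := by
      have h1 := measure_compl (MeasurableSet.iUnion hEmeas) (measure_ne_top P _)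
      rw [hcompl, measure_univ] at h1
      have h2 : P (⋃ k, E k) ≤ 1 := prob_le_one
      have h3 : (1 : ENNReal) ≤ P (⋃ k, E k) := by
        rwa [eq_comm, tsub_eq_zero_iff_le] at h1
      exact le_antisymm h2 h3
    have hiU : P (⋃ k, E k) = ∑ k, P (E k) := by
      rw [measure_iUnion hdisj hEmeas, tsum_fintype]
    have hPsum : ∑ k, P (E k) = 1 := by rw [← hiU, hunion]
    calc ∑ k, p k = (∑ k, P (E k)).toReal :=
          (ENNReal.toReal_sum fun k _ => measure_ne_top P _).symm
      _ = 1 := by rw [hPsum]; simp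
  -- the key Hoeffding bound
  have hYint : ∀ j t i, Integrable (Y j t i) P := by
    intro j t i
    apply (integrable_const (1 : ℝ)).mono' (hmeas j t i).aestronglyMeasurable
    filter_upwards with ω
    obtain ⟨h1, h2⟩ := hrange j t i ω
    rw [Real.norm_eq_abs, abs_le]
    exact ⟨by linarith, by linarith⟩
  have hμmem : ∀ j t, μ j t ∈ Set.Icc (0 : ℝ) 1 := by
    intro j t
    rw [← hmean j t 0]
    constructor
    · exact integral_nonneg fun ω => (hrange j t 0 ω).1
    · calc ∫ ω, Y j t 0 ω ∂P ≤ ∫ _ω, (1 : ℝ) ∂P :=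
            integral_mono (hYint j t 0) (integrable_const _) fun ω => (hrange j t 0 ω).2
        _ = 1 := by simp
  have hApos : ∀ j, 0 < A j := by
    intro j
    have hN0 : (0 : ℝ) < (N j 0 : ℝ) := by exact_mod_cast hN j 0
    have hN1 : (0 : ℝ) < (N j 1 : ℝ) := by exact_mod_cast hN j 1
    rw [hA j]
    rcases eq_or_ne (π j) 1 with h1 | h1
    · have : (0:ℝ) < π j ^ 2 / (N j 1 : ℝ) := by rw [h1]; positivity
      have h2 : (0:ℝ) ≤ (1 - π j) ^ 2 / (N j 0 : ℝ) := by positivity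
      linarith
    · have h2 : (0:ℝ) < (1 - π j) ^ 2 / (N j 0 : ℝ) := by
        apply div_pos _ hN0
        have : 1 - π j ≠ 0 := fun h => h1 (by linarith)
        positivity
      have h3 : (0:ℝ) ≤ π j ^ 2 / (N j 1 : ℝ) := by positivity
      linarith
  have key : ∀ k, p k * (U M - U k)
      ≤ Real.exp (-2 * (U M - U k) ^ 2 / (A k + A M)) * (U M - U k) := by
    intro k
    have hΔ0 : 0 ≤ U M - U k := sub_nonneg.2 (hM k)
    rcases hΔ0.eq_or_lt with hΔ | hΔ
    · rw [← hΔ]; simp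
    · have hkM : k ≠ M := fun h => by rw [h, sub_self] at hΔ; exact lt_irrefl _ hΔ
      suffices hpk : p k ≤ Real.exp (-2 * (U M - U k) ^ 2 / (A k + A M)) by
        exact mul_le_mul_of_nonneg_right hpk hΔ0
      -- set up the Hoeffding application
      set n := N k 0 + N k 1 + N M 0 + N M 1 with hn
      set w : Fin K → Fin 2 → ℝ := fun j t => if t = 0 then 1 - π j else π j with hw
      set c : Fin K × Fin 2 × ℕ → ℝ :=
        fun q => (if q.1 = k then w k q.2.1 else -(w M q.2.1)) / (N q.1 q.2.1 : ℝ) with hcdef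
      set X : Fin K × Fin 2 × ℕ → Ω → ℝ := fun q ω => c q * Y q.1 q.2.1 q.2.2 ω with hXdef
      set s : Finset (Fin K × Fin 2 × ℕ) :=
        (({k, M} : Finset (Fin K)) ×ˢ ((Finset.univ : Finset (Fin 2)) ×ˢ Finset.range n)).filter
          (fun q => q.2.2 < N q.1 q.2.1) with hs
      have hsum_s : ∀ g : Fin K × Fin 2 × ℕ → ℝ, ∑ q ∈ s, g q =
          ((∑ i ∈ Finset.range (N k 0), g (k, 0, i))
            + ∑ i ∈ Finset.range (N k 1), g (k, 1, i))
          + ((∑ i ∈ Finset.range (N M 0), g (M, 0, i))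
            + ∑ i ∈ Finset.range (N M 1), g (M, 1, i)) := by
        intro g
        have hinner : ∀ (j : Fin K) (t : Fin 2), N j t ≤ n →
            ∑ i ∈ Finset.range n, (if i < N j t then g (j, t, i) else 0)
              = ∑ i ∈ Finset.range (N j t), g (j, t, i) := by
          intro j t h
          rw [← Finset.sum_subset (Finset.range_subset_range.2 h)
            (fun x _ hnx => if_neg (by simpa using hnx))]
          exact Finset.sum_congr rfl fun i hi => if_pos (Finset.mem_range.1 hi)
        rw [hs, Finset.sum_filter, Finset.sum_product, Finset.sum_pair hkM]
        simp only [Finset.sum_product]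
        rw [Fin.sum_univ_two, Fin.sum_univ_two]
        rw [hinner k 0 (by omega), hinner k 1 (by omega),
          hinner M 0 (by omega), hinner M 1 (by omega)]
      -- values of c
      have hck0 : ∀ i : ℕ, c (k, 0, i) = (1 - π k) / (N k 0 : ℝ) := by
        intro i; simp [hcdef, hw]
      have hck1 : ∀ i : ℕ, c (k, 1, i) = π k / (N k 1 : ℝ) := by
        intro i; simp [hcdef, hw]
      have hcM0 : ∀ i : ℕ, c (M, 0, i) = -(1 - π M) / (N M 0 : ℝ) := by
        intro i; simp [hcdef, hw, Ne.symm hkM]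
      have hcM1 : ∀ i : ℕ, c (M, 1, i) = -(π M) / (N M 1 : ℝ) := by
        intro i; simp [hcdef, hw, Ne.symm hkM]
      -- bounds data
      have hX_indep : iIndepFun (m := fun _ => inferInstance) X P :=
        hindep.comp (fun q (x : ℝ) => c q * x) (fun q => measurable_id.const_mul _)
      have hmeasX : ∀ q, Measurable (X q) := fun q => (hmeas _ _ _).const_mul _
      have habX : ∀ q ∈ s, ∀ ω, X q ω ∈ Set.Icc (min (c q) 0) (max (c q) 0) := by
        intro q _ ω
        obtain ⟨h1, h2⟩ := hrange q.1 q.2.1 q.2.2 ω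
        rcases le_total 0 (c q) with hcq | hcq
        · constructor
          · calc min (c q) 0 ≤ 0 := min_le_right _ _
              _ ≤ X q ω := mul_nonneg hcq h1
          · calc X q ω ≤ c q * 1 := mul_le_mul_of_nonneg_left h2 hcq
              _ ≤ max (c q) 0 := by rw [mul_one]; exact le_max_left _ _
        · constructor
          · calc min (c q) 0 ≤ c q * 1 := by rw [mul_one]; exact min_le_left _ _
              _ ≤ X q ω := mul_le_mul_of_nonpos_left h2 hcq
          · calc X q ω ≤ 0 := mul_nonpos_of_nonpos_of_nonneg hcq h1
              _ ≤ max (c q) 0 := le_max_right _ _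
      have hmX : ∀ q ∈ s, ∫ ω, X q ω ∂P = c q * μ q.1 q.2.1 := by
        intro q _
        rw [hXdef]
        simp only
        rw [integral_const_mul, hmean]
      have hamX : ∀ q ∈ s, min (c q) 0 ≤ c q * μ q.1 q.2.1 := by
        intro q _
        obtain ⟨h1, h2⟩ := hμmem q.1 q.2.1
        rcases le_total 0 (c q) with hcq | hcq
        · exact (min_le_right _ _).trans (mul_nonneg hcq h1)
        · calc min (c q) 0 ≤ c q * 1 := by rw [mul_one]; exact min_le_left _ _
            _ ≤ c q * μ q.1 q.2.1 := mul_le_mul_of_nonpos_left h2 hcq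
      have hmbX : ∀ q ∈ s, c q * μ q.1 q.2.1 ≤ max (c q) 0 := by
        intro q _
        obtain ⟨h1, h2⟩ := hμmem q.1 q.2.1
        rcases le_total 0 (c q) with hcq | hcq
        · calc c q * μ q.1 q.2.1 ≤ c q * 1 := mul_le_mul_of_nonneg_left h2 hcq
            _ ≤ max (c q) 0 := by rw [mul_one]; exact le_max_left _ _
        · exact (mul_nonpos_of_nonpos_of_nonneg hcq h1).trans (le_max_right _ _)
      -- the variance proxy
      have hN0k : (0 : ℝ) < (N k 0 : ℝ) := by exact_mod_cast hN k 0
      have hN1k : (0 : ℝ) < (N k 1 : ℝ) := by exact_mod_cast hN k 1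
      have hN0M : (0 : ℝ) < (N M 0 : ℝ) := by exact_mod_cast hN M 0
      have hN1M : (0 : ℝ) < (N M 1 : ℝ) := by exact_mod_cast hN M 1
      have hcval : A k + A M = ∑ q ∈ s, (max (c q) 0 - min (c q) 0) ^ 2 := by
        have h1 : ∀ q : Fin K × Fin 2 × ℕ, (max (c q) 0 - min (c q) 0) ^ 2 = c q ^ 2 := by
          intro q
          rcases le_total 0 (c q) with hcq | hcq
          · rw [max_eq_left hcq, min_eq_right hcq, sub_zero]
          · rw [max_eq_right hcq, min_eq_left hcq, zero_sub, neg_sq]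
        simp only [h1]
        rw [hsum_s (fun q => c q ^ 2)]
        simp only [hck0, hck1, hcM0, hcM1]
        rw [Finset.sum_const, Finset.sum_const, Finset.sum_const, Finset.sum_const]
        simp only [Finset.card_range, nsmul_eq_mul]
        rw [hA k, hA M]
        field_simp
      have hcpos : 0 < A k + A M := add_pos (hApos k) (hApos M)
      -- Hoeffding bound
      have hB := hoeff_sum s X hX_indep hmeasX (fun q => min (c q) 0) (fun q => max (c q) 0)
        (fun q => c q * μ q.1 q.2.1) habX hmX hamX hmbX hΔ hcval hcpos
      -- sums identify
      have hXsum : ∀ ω, ∑ q ∈ s, X q ω = Uhat k ω - Uhat M ω := by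
        intro ω
        rw [hsum_s (fun q => X q ω)]
        simp only [hXdef, hck0, hck1, hcM0, hcM1]
        rw [← Finset.mul_sum, ← Finset.mul_sum, ← Finset.mul_sum, ← Finset.mul_sum,
          hUhat k ω, hUhat M ω]
        field_simp
        ring
      have hmsum : ∑ q ∈ s, c q * μ q.1 q.2.1 = U k - U M := by
        rw [hsum_s (fun q => c q * μ q.1 q.2.1)]
        simp only [hck0, hck1, hcM0, hcM1]
        rw [Finset.sum_const, Finset.sum_const, Finset.sum_const, Finset.sum_const]
        simp only [Finset.card_range, nsmul_eq_mul]
        rw [hU k, hU M]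
        field_simp
        ring
      have hsub : E k ⊆ {ω | U M - U k ≤ ∑ q ∈ s, X q ω - ∑ q ∈ s, c q * μ q.1 q.2.1} := by
        intro ω hω
        have h1 : Uhat M ω < Uhat k ω := hω M (Ne.symm hkM)
        simp only [Set.mem_setOf_eq]
        rw [hXsum ω, hmsum]
        linarith
      calc p k ≤ (P {ω | U M - U k ≤ ∑ q ∈ s, X q ω - ∑ q ∈ s, c q * μ q.1 q.2.1}).toReal :=
            ENNReal.toReal_mono (measure_ne_top _ _) (measure_mono hsub)
        _ ≤ Real.exp (-2 * (U M - U k) ^ 2 / (A k + A M)) := hB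
  -- conclusion
  have hu' : u = ∑ k, p k * U k := hu
  constructor
  · have hrw : ∑ k, p k * (U M - U k) = U M - ∑ k, p k * U k := by
      simp only [mul_sub]
      rw [Finset.sum_sub_distrib, ← Finset.sum_mul, hsum1, one_mul]
    have hle : ∑ k, p k * (U M - U k)
        ≤ ∑ k, Real.exp (-2 * (U M - U k) ^ 2 / (A k + A M)) * (U M - U k) :=
      Finset.sum_le_sum fun k _ => key k
    rw [hrw] at hle
    rw [hu']
    linarith
  · rw [hu']
    calc ∑ k, p k * U k ≤ ∑ k, p k * U M :=
          Finset.sum_le_sum fun k _ => mul_le_mul_of_nonneg_left (hM k) (hp0 k)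
      _ = U M := by rw [← Finset.sum_mul, hsum1, one_mul]
end

section
/- Under the MES sampling setup, the regret of the multinomial empirical success rule satisfies 0 ≤ U_{M*} − u ≤ (1/2)·e^{−1/2}·Σ_{k≠M*} (A_k + A_{M*})^{1/2}. -/
open MeasureTheory ProbabilityTheory Finset



lemma hoeff_core (p u : ℝ) (hp0 : 0 ≤ p) (hp1 : p ≤ 1) :
    (1 - p) * Real.exp (-(p * u)) + p * Real.exp ((1 - p) * u) ≤ Real.exp (u ^ 2 / 8) := by
  set g : ℝ → ℝ := fun x => 1 - p + p * Real.exp x with hg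
  have hgpos : ∀ x, 0 < g x := by
    intro x
    rcases lt_or_eq_of_le hp1 with h | h
    · have : 0 < 1 - p := by linarith
      have : 0 ≤ p * Real.exp x := mul_nonneg hp0 (Real.exp_pos x).le
      simp only [hg]; linarith
    · simp only [hg, ← h]
      have := Real.exp_pos x
      nlinarith
  set L : ℝ → ℝ := fun x => Real.log (g x) - p * x with hL
  set L' : ℝ → ℝ := fun x => p * Real.exp x / g x - p with hL'
  have hgd : ∀ x, HasDerivAt g (p * Real.exp x) x := by
    intro x
    exact ((Real.hasDerivAt_exp x).const_mul p).const_add (1 - p)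
  have hLd : ∀ x, HasDerivAt L (L' x) x := by
    intro x
    have h1 : HasDerivAt (fun x => Real.log (g x)) (p * Real.exp x / g x) x :=
      (hgd x).log (hgpos x).ne'
    have := h1.sub ((hasDerivAt_id x).const_mul p); simp only [mul_one] at this; exact this
  have hLd' : ∀ x, HasDerivAt L'
      ((p * Real.exp x * g x - p * Real.exp x * (p * Real.exp x)) / g x ^ 2) x := by
    intro x
    exact (((Real.hasDerivAt_exp x).const_mul p).div (hgd x) (hgpos x).ne').sub_const p
  have hL'bound : ∀ x, ‖(p * Real.exp x * g x - p * Real.exp x * (p * Real.exp x)) / g x ^ 2‖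
      ≤ 1 / 4 := by
    intro x
    have hgx := hgpos x
    have hex := Real.exp_pos x
    rw [Real.norm_eq_abs, abs_div, abs_of_pos (by positivity : (0:ℝ) < g x ^ 2),
      div_le_iff₀ (by positivity)]
    have hkey : 0 ≤ p * Real.exp x * (1 - p) :=
      mul_nonneg (mul_nonneg hp0 hex.le) (by linarith)
    rw [abs_of_nonneg (by simp only [hg]; nlinarith)]
    simp only [hg]
    nlinarith [sq_nonneg (1 - p - p * Real.exp x)]
  have hL'0 : L' 0 = 0 := by simp [hL', hg]
  have hL'le : ∀ x, |L' x| ≤ |x| / 4 := by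
    intro x
    have := Convex.norm_image_sub_le_of_norm_hasDerivWithin_le
      (f := L') (f' := fun x => (p * Real.exp x * g x - p * Real.exp x * (p * Real.exp x)) / g x ^ 2)
      (s := Set.univ) (C := 1/4)
      (fun y _ => (hLd' y).hasDerivWithinAt) (fun y _ => hL'bound y) convex_univ
      (Set.mem_univ 0) (Set.mem_univ x)
    rw [hL'0, sub_zero, sub_zero, Real.norm_eq_abs, Real.norm_eq_abs] at this
    linarith
  -- h := x^2/8 - L x has h 0 = 0 and is monotone on [0,∞), antitone on (-∞,0]
  set h : ℝ → ℝ := fun x => x ^ 2 / 8 - L x with hh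
  have hhd : ∀ x, HasDerivAt h (x / 4 - L' x) x := by
    intro x
    have h1 : HasDerivAt (fun x : ℝ => x ^ 2 / 8) (x / 4) x := by
      have := (hasDerivAt_pow 2 x).div_const 8
      simpa [pow_one] using this.congr_deriv (by ring)
    exact h1.sub (hLd x)
  have hderiv : ∀ x, deriv h x = x / 4 - L' x := fun x => (hhd x).deriv
  have hdiff : Differentiable ℝ h := fun x => (hhd x).differentiableAt
  have hLle : ∀ x, L x ≤ x ^ 2 / 8 := by
    intro x
    have hh0 : h 0 = 0 := by
      simp [hh, hL, hg]
    have key : 0 ≤ h x := by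
      rcases le_total 0 x with hx | hx
      · have mono := monotoneOn_of_deriv_nonneg (convex_Icc 0 x)
          hdiff.continuous.continuousOn hdiff.differentiableOn
          (fun y hy => by
            rw [hderiv]
            have hy0 : 0 ≤ y := by
              rcases (interior_subset hy : y ∈ Set.Icc 0 x) with ⟨h1, _⟩; exact h1
            have := hL'le y
            rw [abs_of_nonneg hy0] at this
            have := abs_le.1 this
            linarith [this.2, this.1])
        have := mono (Set.left_mem_Icc.2 hx) (Set.right_mem_Icc.2 hx) hx
        rw [hh0] at this; linarith
      · have anti := antitoneOn_of_deriv_nonpos (convex_Icc x 0)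
          hdiff.continuous.continuousOn hdiff.differentiableOn
          (fun y hy => by
            rw [hderiv]
            have hy0 : y ≤ 0 := by
              rcases (interior_subset hy : y ∈ Set.Icc x 0) with ⟨_, h1⟩; exact h1
            have := hL'le y
            rw [abs_of_nonpos hy0] at this
            have := abs_le.1 this
            linarith [this.2, this.1])
        have := anti (Set.left_mem_Icc.2 hx) (Set.right_mem_Icc.2 hx) hx
        rw [hh0] at this; linarith
    simp only [hh] at key; linarith
  -- now conclude
  have hexp : (1 - p) * Real.exp (-(p * u)) + p * Real.exp ((1 - p) * u)
      = Real.exp (L u) := by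
    have h1 : Real.exp ((1 - p) * u) = Real.exp u * Real.exp (-(p * u)) := by
      rw [← Real.exp_add]; ring_nf
    simp only [hL]
    rw [Real.exp_sub, Real.exp_log (hgpos u), h1, Real.exp_neg]
    simp only [hg]
    field_simp
  rw [hexp]
  exact Real.exp_le_exp.2 (hLle u)


section
variable {Ω : Type*} [MeasurableSpace Ω]

lemma bdd_integrable (P : Measure Ω) [IsProbabilityMeasure P] {X : Ω → ℝ} {C : ℝ}
    (hm : AEStronglyMeasurable X P) (hb : ∀ ω, |X ω| ≤ C) : Integrable X P :=
  Integrable.mono' (integrable_const C) hm (ae_of_all _ hb)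

lemma hoeffding_mgf (P : Measure Ω) [IsProbabilityMeasure P] {X : Ω → ℝ}
    (hm : Measurable X) {a b : ℝ} (hab : ∀ ω, X ω ∈ Set.Icc a b)
    (h0 : ∫ ω, X ω ∂P = 0) (t : ℝ) :
    mgf X P t ≤ Real.exp (t ^ 2 * (b - a) ^ 2 / 8) := by
  have hXint : Integrable X P := by
    refine bdd_integrable P hm.aestronglyMeasurable (C := max |a| |b|) fun ω => ?_
    rcases hab ω with ⟨h1, h2⟩
    rw [abs_le]
    constructor
    · have := neg_abs_le a; have := le_max_left |a| |b|; linarith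
    · have := le_abs_self b; have := le_max_right |a| |b|; linarith
  have ha0 : a ≤ 0 := by
    have := integral_mono (integrable_const a) hXint (fun ω => (hab ω).1)
    simpa [h0] using this
  have hb0 : 0 ≤ b := by
    have := integral_mono hXint (integrable_const b) (fun ω => (hab ω).2)
    simpa [h0] using this
  rcases eq_or_lt_of_le (ha0.trans hb0) with hab' | hab'
  · -- a = b = 0, X ≡ 0
    have ha : a = 0 := le_antisymm ha0 (by rw [hab']; exact hb0)
    have hb : b = 0 := by rw [← hab', ha]
    have hX0 : ∀ ω, X ω = 0 := fun ω =>
      le_antisymm (hb ▸ (hab ω).2) (ha ▸ (hab ω).1)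
    have : mgf X P t = 1 := by
      unfold mgf
      simp only [hX0, mul_zero, Real.exp_zero]
      simp
    rw [this]
    exact Real.one_le_exp (by positivity)
  · set p : ℝ := -a / (b - a) with hp
    have hba : 0 < b - a := by linarith
    have hp0 : 0 ≤ p := div_nonneg (by linarith) hba.le
    have hp1 : p ≤ 1 := by rw [div_le_one hba]; linarith
    -- pointwise convexity bound
    have hpt : ∀ ω, Real.exp (t * X ω)
        ≤ (b - X ω) / (b - a) * Real.exp (t * a) + (X ω - a) / (b - a) * Real.exp (t * b) := by
      intro ω
      rcases hab ω with ⟨h1, h2⟩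
      have hl1 : (0:ℝ) ≤ (b - X ω) / (b - a) := div_nonneg (by linarith) hba.le
      have hl2 : (0:ℝ) ≤ (X ω - a) / (b - a) := div_nonneg (by linarith) hba.le
      have hsum : (b - X ω) / (b - a) + (X ω - a) / (b - a) = 1 := by
        field_simp
        ring
      have := convexOn_exp.2 (Set.mem_univ (t * a)) (Set.mem_univ (t * b)) hl1 hl2 hsum
      simp only [smul_eq_mul] at this
      have harg : (b - X ω) / (b - a) * (t * a) + (X ω - a) / (b - a) * (t * b) = t * X ω := by
        field_simp
        ring
      rwa [harg] at this
    -- integrate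
    have hrw : ∀ ω, (b - X ω) / (b - a) * Real.exp (t * a) + (X ω - a) / (b - a) * Real.exp (t * b)
        = (b * Real.exp (t * a) - a * Real.exp (t * b)) / (b - a)
          + X ω * ((Real.exp (t * b) - Real.exp (t * a)) / (b - a)) := by
      intro ω; field_simp; ring
    have hint2 : Integrable (fun ω => (b - X ω) / (b - a) * Real.exp (t * a)
        + (X ω - a) / (b - a) * Real.exp (t * b)) P := by
      simp only [hrw]
      exact (integrable_const _).add (hXint.mul_const _)
    have hintexp : Integrable (fun ω => Real.exp (t * X ω)) P := by
      refine bdd_integrable P (hm.const_mul t).exp.aestronglyMeasurable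
        (C := Real.exp (max (t * a) (t * b))) fun ω => ?_
      rw [abs_of_pos (Real.exp_pos _), Real.exp_le_exp]
      rcases le_total 0 t with ht | ht
      · exact le_max_of_le_right (by nlinarith [(hab ω).2])
      · exact le_max_of_le_left (by nlinarith [(hab ω).1])
    have hmgf : mgf X P t ≤ (b * Real.exp (t * a) - a * Real.exp (t * b)) / (b - a) := by
      unfold mgf
      calc ∫ ω, Real.exp (t * X ω) ∂P ≤ ∫ ω, ((b - X ω) / (b - a) * Real.exp (t * a)
            + (X ω - a) / (b - a) * Real.exp (t * b)) ∂P := integral_mono hintexp hint2 hpt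
        _ = (b * Real.exp (t * a) - a * Real.exp (t * b)) / (b - a) := by
            simp only [hrw]
            rw [integral_add (integrable_const _) (hXint.mul_const _), integral_const,
              integral_mul_const, h0]
            simp
    refine hmgf.trans ?_
    have hcore := hoeff_core p (t * (b - a)) hp0 hp1
    have he1 : -(p * (t * (b - a))) = t * a := by
      rw [hp]; field_simp
    have he2 : (1 - p) * (t * (b - a)) = t * b := by
      rw [hp]; field_simp; ring
    have he3 : (1 : ℝ) - p = b / (b - a) := by rw [hp]; field_simp; ring
    rw [he1, he2, he3] at hcore
    have harg2 : (t * (b - a)) ^ 2 / 8 = t ^ 2 * (b - a) ^ 2 / 8 := by ring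
    rw [harg2] at hcore
    refine le_trans (le_of_eq ?_) hcore
    rw [hp]
    field_simp
    ring

end
lemma chernoff_sum {Ω : Type*} [MeasurableSpace Ω] (P : Measure Ω) [IsProbabilityMeasure P]
    {ι : Type*} {X : ι → Ω → ℝ} (s : Finset ι)
    (hindep : iIndepFun X P) (hmeas : ∀ i, Measurable (X i))
    (a b : ι → ℝ) (hab : ∀ i ω, X i ω ∈ Set.Icc (a i) (b i))
    (h0 : ∀ i, ∫ ω, X i ω ∂P = 0) {ε B : ℝ} (hε : 0 ≤ ε)
    (hB : ∑ i ∈ s, (b i - a i) ^ 2 = B) (hBpos : 0 < B) :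
    (P {ω | ε ≤ ∑ i ∈ s, X i ω}).toReal ≤ Real.exp (-(2 * ε ^ 2 / B)) := by
  classical
  set t : ℝ := 4 * ε / B with ht
  have ht0 : 0 ≤ t := by positivity
  have hintexp : ∀ i, Integrable (fun ω => Real.exp (t * X i ω)) P := by
    intro i
    refine bdd_integrable P ((hmeas i).const_mul t).exp.aestronglyMeasurable
      (C := Real.exp (max (t * a i) (t * b i))) fun ω => ?_
    rw [abs_of_pos (Real.exp_pos _), Real.exp_le_exp]
    exact le_max_of_le_right (by nlinarith [(hab i ω).2])
  have hint : Integrable (fun ω => Real.exp (t * (∑ i ∈ s, X i) ω)) P :=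
    hindep.integrable_exp_mul_sum hmeas (fun i _ => hintexp i)
  have hcher := measure_ge_le_exp_mul_mgf (X := ∑ i ∈ s, X i) (μ := P) ε ht0 hint
  have hmgf : mgf (∑ i ∈ s, X i) P t ≤ Real.exp (t ^ 2 * B / 8) := by
    rw [hindep.mgf_sum hmeas s]
    calc ∏ i ∈ s, mgf (X i) P t
        ≤ ∏ i ∈ s, Real.exp (t ^ 2 * (b i - a i) ^ 2 / 8) := by
          refine Finset.prod_le_prod (fun i _ => mgf_nonneg) fun i _ =>
            hoeffding_mgf P (hmeas i) (hab i) (h0 i) t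
      _ = Real.exp (∑ i ∈ s, t ^ 2 * (b i - a i) ^ 2 / 8) := (Real.exp_sum _ _).symm
      _ = Real.exp (t ^ 2 * B / 8) := by
          congr 1
          rw [← hB, Finset.mul_sum, Finset.sum_div]
  have hset : {ω | ε ≤ ∑ i ∈ s, X i ω} = {ω | ε ≤ (∑ i ∈ s, X i) ω} := by
    ext ω; simp
  rw [hset]
  refine hcher.trans ?_
  calc Real.exp (-t * ε) * mgf (∑ i ∈ s, X i) P t
      ≤ Real.exp (-t * ε) * Real.exp (t ^ 2 * B / 8) := by
        exact mul_le_mul_of_nonneg_left hmgf (Real.exp_pos _).le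
    _ = Real.exp (-t * ε + t ^ 2 * B / 8) := (Real.exp_add _ _).symm
    _ = Real.exp (-(2 * ε ^ 2 / B)) := by
        congr 1
        rw [ht]
        field_simp
        ring
lemma final_calc {Δ B : ℝ} (hΔ : 0 ≤ Δ) (hB : 0 < B) :
    Real.exp (-(2 * Δ ^ 2 / B)) * Δ ≤ 1 / 2 * Real.exp (-(1 / 2)) * Real.sqrt B := by
  set s := Real.sqrt B with hs
  have hs0 : 0 < s := Real.sqrt_pos.2 hB
  have hs2 : s ^ 2 = B := Real.sq_sqrt hB.le
  have key : Δ ≤ 1 / 2 * s * Real.exp (2 * Δ ^ 2 / B - 1 / 2) := by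
    have h1 : 2 * Δ ^ 2 / B - 1 / 2 + 1 ≤ Real.exp (2 * Δ ^ 2 / B - 1 / 2) :=
      Real.add_one_le_exp _
    have h2 : Δ ≤ 1 / 2 * s * (2 * Δ ^ 2 / B - 1 / 2 + 1) := by
      rw [← hs2]
      have hexpand : 1 / 2 * s * (2 * Δ ^ 2 / s ^ 2 - 1 / 2 + 1) = Δ ^ 2 / s + s / 4 := by
        field_simp
        ring
      rw [hexpand, ← sub_nonneg]
      have : Δ ^ 2 / s + s / 4 - Δ = (Δ - s / 2) ^ 2 / s := by
        field_simp
        ring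
      rw [this]
      positivity
    refine h2.trans ?_
    exact mul_le_mul_of_nonneg_left h1 (by positivity)
  calc Real.exp (-(2 * Δ ^ 2 / B)) * Δ
      ≤ Real.exp (-(2 * Δ ^ 2 / B)) * (1 / 2 * s * Real.exp (2 * Δ ^ 2 / B - 1 / 2)) :=
        mul_le_mul_of_nonneg_left key (Real.exp_pos _).le
    _ = 1 / 2 * Real.exp (-(1 / 2)) * s := by
        rw [mul_comm (Real.exp _), mul_assoc, ← Real.exp_add]
        ring_nf
lemma mul_sub_mem (c m : ℝ) {y : ℝ} (h0 : 0 ≤ y) (h1 : y ≤ 1) :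
    c * (y - m) ∈ Set.Icc (min (c * (0 - m)) (c * (1 - m)))
      (max (c * (0 - m)) (c * (1 - m))) := by
  rcases le_total 0 c with hc | hc
  · exact ⟨min_le_of_left_le (by nlinarith), le_max_of_le_right (by nlinarith)⟩
  · exact ⟨min_le_of_right_le (by nlinarith), le_max_of_le_left (by nlinarith)⟩


/-- Under the MES sampling setup, the regret of the multinomial empirical
success rule satisfies `0 ≤ U_{M*} − u ≤ (1/2)·e^{−1/2}·Σ_{k≠M*} (A_k + A_{M*})^{1/2}`. -/
theorem mes_regret_bound
    {Ω : Type*} [MeasurableSpace Ω] (P : Measure Ω) [IsProbabilityMeasure P]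
    (K : ℕ) (hK : 1 ≤ K)
    (π : Fin K → ℝ) (hπ : ∀ k, π k ∈ Set.Icc (0 : ℝ) 1)
    (N : Fin K → Fin 2 → ℕ) (hN : ∀ k t, 1 ≤ N k t)
    (Y : Fin K → Fin 2 → ℕ → Ω → ℝ)
    (hmeas : ∀ k t i, Measurable (Y k t i))
    (hrange : ∀ k t i ω, Y k t i ω ∈ Set.Icc (0 : ℝ) 1)
    (μ : Fin K → Fin 2 → ℝ)
    (hmean : ∀ k t i, ∫ ω, Y k t i ω ∂P = μ k t)
    (hident : ∀ k t i j, P.map (Y k t i) = P.map (Y k t j))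
    (hindep : iIndepFun
      (fun p : Fin K × Fin 2 × ℕ => Y p.1 p.2.1 p.2.2) P)
    (Uhat : Fin K → Ω → ℝ)
    (hUhat : ∀ k ω, Uhat k ω
      = (1 - π k) * ((N k 0 : ℝ)⁻¹ * ∑ i ∈ Finset.range (N k 0), Y k 0 i ω)
        + π k * ((N k 1 : ℝ)⁻¹ * ∑ i ∈ Finset.range (N k 1), Y k 1 i ω))
    (U : Fin K → ℝ)
    (hU : ∀ k, U k = (1 - π k) * μ k 0 + π k * μ k 1)
    (A : Fin K → ℝ)
    (hA : ∀ k, A k = (1 - π k) ^ 2 / (N k 0 : ℝ) + (π k) ^ 2 / (N k 1 : ℝ))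
    (u : ℝ)
    (hu : u = ∑ k, (P {ω | ∀ j, j ≠ k → Uhat j ω < Uhat k ω}).toReal * U k)
    (hties : ∀ j k, j ≠ k → P {ω | Uhat j ω = Uhat k ω} = 0)
    (M : Fin K) (hM : ∀ k, U k ≤ U M) :
    0 ≤ U M - u
      ∧ U M - u ≤ (1 / 2) * Real.exp (-(1 / 2))
          * ∑ k ∈ Finset.univ.erase M, Real.sqrt (A k + A M) := by
  classical
  -- measurability of Uhat
  have hUm : ∀ k, Measurable (Uhat k) := by
    intro k
    have hfe : Uhat k = fun ω =>
        (1 - π k) * ((N k 0 : ℝ)⁻¹ * ∑ i ∈ Finset.range (N k 0), Y k 0 i ω)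
        + π k * ((N k 1 : ℝ)⁻¹ * ∑ i ∈ Finset.range (N k 1), Y k 1 i ω) :=
      funext (hUhat k)
    rw [hfe]
    exact (((Finset.measurable_sum _ fun i _ => hmeas k 0 i).const_mul _).const_mul _).add
      (((Finset.measurable_sum _ fun i _ => hmeas k 1 i).const_mul _).const_mul _)
  set E : Fin K → Set Ω := fun k => {ω | ∀ j, j ≠ k → Uhat j ω < Uhat k ω} with hE
  have hEmeas : ∀ k, MeasurableSet (E k) := by
    intro k
    have : E k = ⋂ j, ⋂ (_ : j ≠ k), {ω | Uhat j ω < Uhat k ω} := by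
      ext ω; simp [hE]
    rw [this]
    exact MeasurableSet.iInter fun j => MeasurableSet.iInter fun h =>
      measurableSet_lt (hUm j) (hUm k)
  have hEdisj : Pairwise (Function.onFun Disjoint E) := by
    intro j k hjk
    rw [Function.onFun, Set.disjoint_left]
    intro ω hωj hωk
    exact absurd (hωj k (Ne.symm hjk)) (not_lt.2 (hωk j hjk).le)
  have hcompl : P (⋃ k, E k)ᶜ = 0 := by
    refine measure_mono_null ?_
      (measure_iUnion_null fun j => measure_iUnion_null fun k =>
        measure_iUnion_null fun (h : j ≠ k) => hties j k h)
    intro ω hω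
    simp only [Set.mem_compl_iff, Set.mem_iUnion, not_exists, hE, Set.mem_setOf_eq] at hω
    push_neg at hω
    obtain ⟨k0, -, hk0⟩ := Finset.exists_max_image Finset.univ (fun j => Uhat j ω)
      ⟨M, Finset.mem_univ M⟩
    obtain ⟨j, hj, hle⟩ := hω k0
    simp only [Set.mem_iUnion]
    exact ⟨j, k0, hj, le_antisymm (hk0 j (Finset.mem_univ j)) hle⟩
  have hUnion : P (⋃ k, E k) = 1 := by
    have h1 := measure_add_measure_compl (MeasurableSet.iUnion hEmeas) (μ := P)
    rw [hcompl, add_zero, measure_univ] at h1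
    exact h1
  have hPsum : ∑ k, P (E k) = 1 := by
    rw [← tsum_fintype (L := SummationFilter.unconditional _), ← measure_iUnion hEdisj hEmeas, hUnion]
  have hpsum : ∑ k, (P (E k)).toReal = 1 := by
    rw [← ENNReal.toReal_sum (fun k _ => measure_ne_top P _), hPsum, ENNReal.toReal_one]
  -- regret decomposition
  have hdecomp : U M - u = ∑ k, (P (E k)).toReal * (U M - U k) := by
    have h2 : ∑ k, (P (E k)).toReal * (U M - U k)
        = (∑ k, (P (E k)).toReal) * U M - ∑ k, (P (E k)).toReal * U k := by
      rw [Finset.sum_mul, ← Finset.sum_sub_distrib]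
      exact Finset.sum_congr rfl fun k _ => by ring
    rw [hu, h2, hpsum, one_mul]
  have hterm_nonneg : ∀ k, 0 ≤ (P (E k)).toReal * (U M - U k) := fun k =>
    mul_nonneg ENNReal.toReal_nonneg (by linarith [hM k])
  have hfirst : 0 ≤ U M - u := by
    rw [hdecomp]; exact Finset.sum_nonneg fun k _ => hterm_nonneg k
  refine ⟨hfirst, ?_⟩
  have hdecomp' : U M - u = ∑ k ∈ Finset.univ.erase M, (P (E k)).toReal * (U M - U k) := by
    rw [hdecomp, ← Finset.sum_erase_add _ _ (Finset.mem_univ M)]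
    simp
  rw [hdecomp', Finset.mul_sum]
  refine Finset.sum_le_sum fun k hk => ?_
  have hkM : k ≠ M := Finset.ne_of_mem_erase hk
  -- the per-arm Hoeffding bound
  have hkey : (P (E k)).toReal * (U M - U k)
      ≤ 1 / 2 * Real.exp (-(1 / 2)) * Real.sqrt (A k + A M) := by
    set Δ : ℝ := U M - U k with hΔdef
    have hΔ0 : 0 ≤ Δ := by have := hM k; simp only [hΔdef]; linarith
    have hNpos : ∀ (j : Fin K) (t : Fin 2), (0:ℝ) < (N j t : ℝ) := fun j t => by
      exact_mod_cast Nat.lt_of_lt_of_le Nat.zero_lt_one (hN j t)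
    have hAkpos : ∀ j, 0 < A j := by
      intro j
      rw [hA j]
      rcases eq_or_lt_of_le (hπ j).2 with h | h
      · have h2 : (0:ℝ) < π j ^ 2 / (N j 1 : ℝ) := div_pos (by rw [h]; norm_num) (hNpos j 1)
        have h1 : (0:ℝ) ≤ (1 - π j) ^ 2 / (N j 0 : ℝ) := div_nonneg (sq_nonneg _) (hNpos j 0).le
        linarith
      · have h1 : (0:ℝ) < (1 - π j) ^ 2 / (N j 0 : ℝ) := div_pos (by nlinarith) (hNpos j 0)
        have h2 : (0:ℝ) ≤ π j ^ 2 / (N j 1 : ℝ) := div_nonneg (sq_nonneg _) (hNpos j 1).le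
        linarith
    have hBpos : 0 < A k + A M := by linarith [hAkpos k, hAkpos M]
    set w : Fin K → Fin 2 → ℝ := fun j t => (if t = 0 then 1 - π j else π j) / (N j t : ℝ)
      with hw
    set c : Fin K × Fin 2 × ℕ → ℝ := fun q =>
      if q.1 = k ∧ q.2.2 < N q.1 q.2.1 then w q.1 q.2.1
      else if q.1 = M ∧ q.2.2 < N q.1 q.2.1 then -w q.1 q.2.1 else 0 with hc
    set X : Fin K × Fin 2 × ℕ → Ω → ℝ :=
      fun q ω => c q * (Y q.1 q.2.1 q.2.2 ω - μ q.1 q.2.1) with hX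
    set aa : Fin K × Fin 2 × ℕ → ℝ := fun q =>
      min (c q * (0 - μ q.1 q.2.1)) (c q * (1 - μ q.1 q.2.1)) with haa
    set bb : Fin K × Fin 2 × ℕ → ℝ := fun q =>
      max (c q * (0 - μ q.1 q.2.1)) (c q * (1 - μ q.1 q.2.1)) with hbb
    set n₀ : ℕ := max (max (N k 0) (N k 1)) (max (N M 0) (N M 1)) with hn₀
    set s : Finset (Fin K × Fin 2 × ℕ) :=
      ({k, M} : Finset (Fin K)) ×ˢ ((Finset.univ : Finset (Fin 2)) ×ˢ Finset.range n₀) with hs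
    have hXindep : iIndepFun X P :=
      hindep.comp (fun q (y : ℝ) => c q * (y - μ q.1 q.2.1))
        (fun q => (measurable_id.sub_const _).const_mul _)
    have hXmeas : ∀ q, Measurable (X q) :=
      fun q => ((hmeas _ _ _).sub measurable_const).const_mul _
    have hXab : ∀ q ω, X q ω ∈ Set.Icc (aa q) (bb q) := fun q ω =>
      mul_sub_mem (c q) (μ q.1 q.2.1) (hrange _ _ _ ω).1 (hrange _ _ _ ω).2
    have hYint : ∀ j t i, Integrable (Y j t i) P := fun j t i =>
      bdd_integrable P (hmeas j t i).aestronglyMeasurable (C := 1) fun ω =>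
        abs_le.2 ⟨by linarith [(hrange j t i ω).1], (hrange j t i ω).2⟩
    have hX0 : ∀ q, ∫ ω, X q ω ∂P = 0 := by
      intro q
      simp only [hX]
      rw [integral_const_mul, integral_sub (hYint _ _ _) (integrable_const _),
        hmean, integral_const, probReal_univ]
      simp
    have hck : ∀ (t : Fin 2) (i : ℕ), c (k, t, i) = if i < N k t then w k t else 0 := by
      intro t i
      by_cases h : i < N k t
      · simp [hc, h]
      · simp [hc, h, hkM]
    have hcM : ∀ (t : Fin 2) (i : ℕ), c (M, t, i) = if i < N M t then -w M t else 0 := by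
      intro t i
      by_cases h : i < N M t
      · simp [hc, h, Ne.symm hkM]
      · simp [hc, h, Ne.symm hkM]
    have hsplit : ∀ f : Fin K × Fin 2 × ℕ → ℝ, ∑ q ∈ s, f q
        = (∑ t : Fin 2, ∑ i ∈ Finset.range n₀, f (k, t, i))
          + (∑ t : Fin 2, ∑ i ∈ Finset.range n₀, f (M, t, i)) := by
      intro f
      rw [hs, Finset.sum_product]
      rw [show ({k, M} : Finset (Fin K)) = insert k {M} from rfl,
        Finset.sum_insert (by simp [hkM]), Finset.sum_singleton]
      simp [Finset.sum_product]
    have hle1 : N k 0 ≤ n₀ := le_trans (le_max_left _ _) (le_max_left _ _)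
    have hle2 : N k 1 ≤ n₀ := le_trans (le_max_right _ _) (le_max_left _ _)
    have hle3 : N M 0 ≤ n₀ := le_trans (le_max_left _ _) (le_max_right _ _)
    have hle4 : N M 1 ≤ n₀ := le_trans (le_max_right _ _) (le_max_right _ _)
    have htrunc : ∀ (j : Fin K) (σ : ℝ) (t : Fin 2),
        (∀ i, c (j, t, i) = if i < N j t then σ else 0) → N j t ≤ n₀ → ∀ ω : Ω,
        ∑ i ∈ Finset.range n₀, X (j, t, i) ω
          = σ * ((∑ i ∈ Finset.range (N j t), Y j t i ω) - (N j t : ℝ) * μ j t) := by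
      intro j σ t hcj hle ω
      have h1 : ∑ i ∈ Finset.range n₀, X (j, t, i) ω
          = ∑ i ∈ Finset.range (N j t), X (j, t, i) ω := by
        refine (Finset.sum_subset (Finset.range_subset_range.2 hle) fun i _ hi => ?_).symm
        rw [Finset.mem_range, not_lt] at hi
        simp only [hX]
        rw [hcj i, if_neg (not_lt.2 hi), zero_mul]
      rw [h1, Finset.sum_congr rfl (fun i hi => by
          simp only [hX]; rw [hcj i, if_pos (Finset.mem_range.1 hi)]),
        ← Finset.mul_sum, Finset.sum_sub_distrib, Finset.sum_const,
        Finset.card_range, nsmul_eq_mul]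
    have harm : ∀ (j : Fin K) (ω : Ω),
        w j 0 * ((∑ i ∈ Finset.range (N j 0), Y j 0 i ω) - (N j 0 : ℝ) * μ j 0)
          + w j 1 * ((∑ i ∈ Finset.range (N j 1), Y j 1 i ω) - (N j 1 : ℝ) * μ j 1)
          = Uhat j ω - U j := by
      intro j ω
      have e0 : w j 0 = (1 - π j) / (N j 0 : ℝ) := by simp [hw]
      have e1 : w j 1 = π j / (N j 1 : ℝ) := by simp [hw]
      rw [e0, e1, hUhat j ω, hU j]
      have h0 := (hNpos j 0).ne'
      have h1 := (hNpos j 1).ne'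
      field_simp
      ring
    have hsum_id : ∀ ω, ∑ q ∈ s, X q ω = (Uhat k ω - U k) - (Uhat M ω - U M) := by
      intro ω
      rw [hsplit (fun q => X q ω), Fin.sum_univ_two, Fin.sum_univ_two,
        htrunc k (w k 0) 0 (fun i => hck 0 i) hle1 ω,
        htrunc k (w k 1) 1 (fun i => hck 1 i) hle2 ω,
        htrunc M (-w M 0) 0 (fun i => hcM 0 i) hle3 ω,
        htrunc M (-w M 1) 1 (fun i => hcM 1 i) hle4 ω]
      have hk' := harm k ω
      have hM' := harm M ω
      linarith
    have hrange_sq : ∀ q, (bb q - aa q) ^ 2 = c q ^ 2 := by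
      intro q
      rcases le_total (c q * (0 - μ q.1 q.2.1)) (c q * (1 - μ q.1 q.2.1)) with h | h
      · simp only [hbb, haa, max_eq_right h, min_eq_left h]; ring
      · simp only [hbb, haa, max_eq_left h, min_eq_right h]; ring
    have htr2 : ∀ (j : Fin K) (σ : ℝ) (t : Fin 2),
        (∀ i, c (j, t, i) = if i < N j t then σ else 0) → N j t ≤ n₀ →
        ∑ i ∈ Finset.range n₀, c (j, t, i) ^ 2 = (N j t : ℝ) * σ ^ 2 := by
      intro j σ t hcj hle
      have h1 : ∑ i ∈ Finset.range n₀, c (j, t, i) ^ 2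
          = ∑ i ∈ Finset.range (N j t), c (j, t, i) ^ 2 := by
        refine (Finset.sum_subset (Finset.range_subset_range.2 hle) fun i _ hi => ?_).symm
        rw [Finset.mem_range, not_lt] at hi
        rw [hcj i, if_neg (not_lt.2 hi)]
        norm_num
      rw [h1, Finset.sum_congr rfl (fun i hi => by
          rw [hcj i, if_pos (Finset.mem_range.1 hi)]),
        Finset.sum_const, Finset.card_range, nsmul_eq_mul]
    have hsq_sum : ∑ q ∈ s, (bb q - aa q) ^ 2 = A k + A M := by
      simp only [hrange_sq]
      rw [hsplit (fun q => c q ^ 2), Fin.sum_univ_two, Fin.sum_univ_two,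
        htr2 k (w k 0) 0 (fun i => hck 0 i) hle1,
        htr2 k (w k 1) 1 (fun i => hck 1 i) hle2,
        htr2 M (-w M 0) 0 (fun i => hcM 0 i) hle3,
        htr2 M (-w M 1) 1 (fun i => hcM 1 i) hle4]
      have harm2 : ∀ j : Fin K, (N j 0 : ℝ) * w j 0 ^ 2 + (N j 1 : ℝ) * w j 1 ^ 2 = A j := by
        intro j
        have e0 : w j 0 = (1 - π j) / (N j 0 : ℝ) := by simp [hw]
        have e1 : w j 1 = π j / (N j 1 : ℝ) := by simp [hw]
        rw [e0, e1, hA j]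
        have h0 := (hNpos j 0).ne'
        have h1 := (hNpos j 1).ne'
        field_simp
      have hk' := harm2 k
      have hM' := harm2 M
      have hneg0 : (-w M 0) ^ 2 = w M 0 ^ 2 := by ring
      have hneg1 : (-w M 1) ^ 2 = w M 1 ^ 2 := by ring
      rw [hneg0, hneg1]
      linarith
    have hincl : E k ⊆ {ω | Δ ≤ ∑ q ∈ s, X q ω} := by
      intro ω hω
      have hlt : Uhat M ω < Uhat k ω := hω M (Ne.symm hkM)
      simp only [Set.mem_setOf_eq]
      rw [hsum_id ω]
      simp only [hΔdef]
      linarith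
    have hcher := chernoff_sum P s hXindep hXmeas aa bb hXab hX0 hΔ0 hsq_sum hBpos
    have hple : (P (E k)).toReal ≤ Real.exp (-(2 * Δ ^ 2 / (A k + A M))) :=
      le_trans (ENNReal.toReal_mono (measure_ne_top P _) (measure_mono hincl)) hcher
    calc (P (E k)).toReal * Δ ≤ Real.exp (-(2 * Δ ^ 2 / (A k + A M))) * Δ :=
          mul_le_mul_of_nonneg_right hple hΔ0
      _ ≤ 1 / 2 * Real.exp (-(1 / 2)) * Real.sqrt (A k + A M) := final_calc hΔ0 hBpos
  exact hkey
end

section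
/- Under the CMES sampling setup, the expected welfare of the conditional multinomial empirical success rule satisfies U_{M*} − Σ_{k=1}^{m} exp(−2·Δ_{M*k}² / {Σ_{l=1}^{L} p_l²·(A_{kl} + A_{M*l})})·Δ_{M*k} ≤ u ≤ U_{M*}. -/
open MeasureTheory ProbabilityTheory Finset

set_option maxHeartbeats 1000000


open MeasureTheory ProbabilityTheory Finset

section CMESAux

variable {Ω : Type*} [MeasurableSpace Ω] {P : Measure Ω} [IsProbabilityMeasure P]

lemma cmes_integrable_of_bound (f : Ω → ℝ) (hm : Measurable f) (C : ℝ) (h : ∀ ω, |f ω| ≤ C) :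
    Integrable f P :=
  (integrable_const C).mono' hm.aestronglyMeasurable (ae_of_all _ (by simpa [Real.norm_eq_abs]))

lemma cmes_hoeff_scalar (p : ℝ) (h0 : 0 ≤ p) (h1 : p ≤ 1) (s : ℝ) :
    1 - p + p * Real.exp s ≤ Real.exp (p * s + s ^ 2 / 8) := by
  set D : ℝ → ℝ := fun x => 1 - p + p * Real.exp x with hD
  have hDpos : ∀ x, 0 < D x := by
    intro x
    have := Real.exp_pos x
    rcases eq_or_lt_of_le h0 with h | h
    · simp [hD, ← h]
    · have : 0 < p * Real.exp x := mul_pos h (Real.exp_pos x)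
      simp only [hD]; nlinarith
  set g : ℝ → ℝ := fun x => p * x + x ^ 2 / 8 - Real.log (D x) with hg
  set g' : ℝ → ℝ := fun x => p + x / 4 - p * Real.exp x / D x with hg'
  have hDder : ∀ x, HasDerivAt D (p * Real.exp x) x := by
    intro x
    exact ((Real.hasDerivAt_exp x).const_mul p).const_add (1 - p)
  have hgder : ∀ x, HasDerivAt g (g' x) x := by
    intro x
    have h1' : HasDerivAt (fun x : ℝ => p * x) p x := by
      simpa using (hasDerivAt_id x).const_mul p
    have h2' : HasDerivAt (fun x : ℝ => x ^ 2 / 8) (x / 4) x := by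
      have := (hasDerivAt_pow 2 x).div_const 8
      rw [show ((2:ℕ):ℝ) * x ^ (2 - 1) / 8 = x / 4 by push_cast; ring] at this; exact this
    have h3' : HasDerivAt (fun x => Real.log (D x)) (p * Real.exp x / D x) x :=
      (hDder x).log (hDpos x).ne'
    exact (h1'.add h2').sub h3'
  have hg'der : ∀ x, HasDerivAt g' (1 / 4 - p * (1 - p) * Real.exp x / (D x) ^ 2) x := by
    intro x
    have h2' : HasDerivAt (fun x : ℝ => x / 4) (1 / 4) x := by
      simpa using (hasDerivAt_id x).div_const 4
    have h3' : HasDerivAt (fun x => p * Real.exp x / D x)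
        ((p * Real.exp x * D x - p * Real.exp x * (p * Real.exp x)) / (D x) ^ 2) x :=
      ((Real.hasDerivAt_exp x).const_mul p).div (hDder x) (hDpos x).ne'
    have heq : (p * Real.exp x * D x - p * Real.exp x * (p * Real.exp x)) / (D x) ^ 2
        = p * (1 - p) * Real.exp x / (D x) ^ 2 := by
      congr 1; simp only [hD]; ring
    rw [heq] at h3'
    have := ((hasDerivAt_const x p).add h2').sub h3'
    rw [zero_add] at this; exact this
  have hg''nonneg : ∀ x, 0 ≤ 1 / 4 - p * (1 - p) * Real.exp x / (D x) ^ 2 := by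
    intro x
    have hD2 : 0 < (D x) ^ 2 := pow_pos (hDpos x) 2
    rw [sub_nonneg, div_le_iff₀ hD2]
    have hDx : D x = 1 - p + p * Real.exp x := rfl
    rw [hDx]
    nlinarith [sq_nonneg ((1 - p) - p * Real.exp x), Real.exp_pos x]
  have hg'mono : Monotone g' := by
    refine monotone_of_deriv_nonneg (fun x => (hg'der x).differentiableAt) ?_
    intro x
    rw [(hg'der x).deriv]
    exact hg''nonneg x
  have hg'0 : g' 0 = 0 := by simp [hg', hD]
  have hg0 : g 0 = 0 := by simp [hg, hD]
  have hgdiff : Differentiable ℝ g := fun x => (hgder x).differentiableAt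
  have hderiv : ∀ x, deriv g x = g' x := fun x => (hgder x).deriv
  have hgnonneg : ∀ x, 0 ≤ g x := by
    intro x
    rcases le_total 0 x with hx | hx
    · have hmono : MonotoneOn g (Set.Ici (0 : ℝ)) := by
        refine monotoneOn_of_deriv_nonneg (convex_Ici 0) hgdiff.continuous.continuousOn
          (hgdiff.differentiableOn) ?_
        intro y hy
        rw [hderiv y]
        rw [interior_Ici] at hy
        have : g' 0 ≤ g' y := hg'mono (le_of_lt hy)
        linarith [hg'0 ▸ this]
      have := hmono (Set.self_mem_Ici) hx hx
      rw [hg0] at this; exact this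
    · have hanti : AntitoneOn g (Set.Iic (0 : ℝ)) := by
        refine antitoneOn_of_deriv_nonpos (convex_Iic 0) hgdiff.continuous.continuousOn
          (hgdiff.differentiableOn) ?_
        intro y hy
        rw [hderiv y]
        rw [interior_Iic] at hy
        have : g' y ≤ g' 0 := hg'mono (le_of_lt hy)
        linarith [hg'0 ▸ this]
      have := hanti (Set.mem_Iic.mpr hx) (Set.self_mem_Iic) hx
      rw [hg0] at this; exact this
  have := hgnonneg s
  have hlog : Real.log (D s) ≤ p * s + s ^ 2 / 8 := by simp only [hg] at this; linarith
  calc 1 - p + p * Real.exp s = Real.exp (Real.log (D s)) := by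
        rw [Real.exp_log (hDpos s)]
  _ ≤ Real.exp (p * s + s ^ 2 / 8) := Real.exp_le_exp.mpr hlog

lemma cmes_mgf_le_of_Icc (X : Ω → ℝ) (hm : Measurable X) (hr : ∀ ω, X ω ∈ Set.Icc (0 : ℝ) 1)
    (s : ℝ) :
    ∫ ω, Real.exp (s * X ω) ∂P ≤ Real.exp (s * (∫ ω, X ω ∂P) + s ^ 2 / 8) := by
  have hX1 : ∀ ω, |X ω| ≤ 1 := fun ω => abs_le.mpr ⟨by linarith [(hr ω).1], (hr ω).2⟩
  have hIntX : Integrable X P := cmes_integrable_of_bound X hm 1 hX1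
  have hIntE : Integrable (fun ω => Real.exp (s * X ω)) P := by
    refine cmes_integrable_of_bound _ (by fun_prop) (Real.exp |s|) fun ω => ?_
    rw [abs_of_pos (Real.exp_pos _)]
    refine Real.exp_le_exp.mpr ?_
    calc s * X ω ≤ |s * X ω| := le_abs_self _
    _ = |s| * |X ω| := abs_mul _ _
    _ ≤ |s| * 1 := mul_le_mul_of_nonneg_left (hX1 ω) (abs_nonneg s)
    _ = |s| := mul_one _
  have hpt : ∀ ω, Real.exp (s * X ω) ≤ (1 - X ω) + X ω * Real.exp s := by
    intro ω
    have h := convexOn_exp.2 (Set.mem_univ (0 : ℝ)) (Set.mem_univ s)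
      (by linarith [(hr ω).2] : (0:ℝ) ≤ 1 - X ω) (hr ω).1 (by ring)
    simpa [mul_comm] using h
  have hIntR : Integrable (fun ω => (1 - X ω) + X ω * Real.exp s) P := by
    exact ((integrable_const (1:ℝ)).sub hIntX).add (hIntX.mul_const _)
  set p := ∫ ω, X ω ∂P with hp
  have hp0 : 0 ≤ p := integral_nonneg fun ω => (hr ω).1
  have hp1 : p ≤ 1 := by
    calc p ≤ ∫ _, (1:ℝ) ∂P := integral_mono hIntX (integrable_const 1) fun ω => (hr ω).2
    _ = 1 := by simp
  calc ∫ ω, Real.exp (s * X ω) ∂P ≤ ∫ ω, ((1 - X ω) + X ω * Real.exp s) ∂P :=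
        integral_mono hIntE hIntR hpt
  _ = 1 - p + p * Real.exp s := by
      rw [integral_add (g := fun ω => X ω * Real.exp s)
          (by exact (integrable_const (1:ℝ)).sub hIntX) (by exact hIntX.mul_const _),
        integral_sub (integrable_const 1) hIntX, integral_mul_const]
      simp [hp]
  _ ≤ Real.exp (p * s + s ^ 2 / 8) := cmes_hoeff_scalar p hp0 hp1 s
  _ = Real.exp (s * p + s ^ 2 / 8) := by rw [mul_comm]

lemma cmes_hoeff_sum {ι : Type*} (X : ι → Ω → ℝ)
    (hindep : iIndepFun X P)
    (hm : ∀ q, Measurable (X q)) (hr : ∀ q ω, X q ω ∈ Set.Icc (0 : ℝ) 1)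
    (S : Finset ι) (c : ι → ℝ) (δ V : ℝ) (hδ : 0 < δ)
    (hmean : ∑ q ∈ S, c q * ∫ ω, X q ω ∂P = -δ)
    (hV : ∑ q ∈ S, (c q) ^ 2 = V) (hVpos : 0 < V) :
    (P {ω | 0 ≤ ∑ q ∈ S, c q * X q ω}).toReal ≤ Real.exp (-2 * δ ^ 2 / V) := by
  classical
  set W : ι → Ω → ℝ := fun q ω => c q * X q ω with hW
  have hWmeas : ∀ q, Measurable (W q) := fun q => (hm q).const_mul _
  have hWindep : iIndepFun W P := by
    have := hindep.comp (fun q (x : ℝ) => c q * x) (fun q => measurable_const_mul _)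
    exact this
  set t : ℝ := 4 * δ / V with ht
  have htpos : 0 < t := by positivity
  have hWbd : ∀ q ω, |W q ω| ≤ |c q| := by
    intro q ω
    rw [hW, abs_mul]
    have h1 : |X q ω| ≤ 1 := abs_le.mpr ⟨by linarith [(hr q ω).1], (hr q ω).2⟩
    calc |c q| * |X q ω| ≤ |c q| * 1 := mul_le_mul_of_nonneg_left h1 (abs_nonneg _)
    _ = |c q| := mul_one _
  have hWint : ∀ q ∈ S, Integrable (fun ω => Real.exp (t * W q ω)) P := by
    intro q _
    refine cmes_integrable_of_bound _ (by fun_prop) (Real.exp (|t| * |c q|)) fun ω => ?_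
    rw [abs_of_pos (Real.exp_pos _)]
    refine Real.exp_le_exp.mpr ?_
    calc t * W q ω ≤ |t * W q ω| := le_abs_self _
    _ = |t| * |W q ω| := abs_mul _ _
    _ ≤ |t| * |c q| := mul_le_mul_of_nonneg_left (hWbd q ω) (abs_nonneg _)
  have hZint : Integrable (fun ω => Real.exp (t * (∑ q ∈ S, W q) ω)) P :=
    hWindep.integrable_exp_mul_sum hWmeas hWint
  have hch := measure_ge_le_exp_mul_mgf (X := ∑ q ∈ S, W q) (μ := P) (0 : ℝ) htpos.le hZint
  have hset : {ω | (0:ℝ) ≤ (∑ q ∈ S, W q) ω} = {ω | 0 ≤ ∑ q ∈ S, c q * X q ω} := by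
    ext ω; simp [hW, Finset.sum_apply]
  rw [hset] at hch
  have hmgf : mgf (∑ q ∈ S, W q) P t = ∏ q ∈ S, mgf (W q) P t :=
    hWindep.mgf_sum hWmeas S
  have hmgfq : ∀ q ∈ S, mgf (W q) P t
      ≤ Real.exp (t * c q * (∫ ω, X q ω ∂P) + (t * c q) ^ 2 / 8) := by
    intro q _
    have : mgf (W q) P t = ∫ ω, Real.exp ((t * c q) * X q ω) ∂P := by
      unfold mgf; congr 1; funext ω; rw [hW]; ring_nf
    rw [this]
    exact cmes_mgf_le_of_Icc (X q) (hm q) (hr q) (t * c q)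
  have hprod : ∏ q ∈ S, mgf (W q) P t
      ≤ ∏ q ∈ S, Real.exp (t * c q * (∫ ω, X q ω ∂P) + (t * c q) ^ 2 / 8) :=
    Finset.prod_le_prod (fun q _ => mgf_nonneg) hmgfq
  have hprodexp : ∏ q ∈ S, Real.exp (t * c q * (∫ ω, X q ω ∂P) + (t * c q) ^ 2 / 8)
      = Real.exp (t * (-δ) + t ^ 2 * V / 8) := by
    rw [← Real.exp_sum]
    congr 1
    rw [Finset.sum_add_distrib]
    have e1 : ∑ q ∈ S, t * c q * (∫ ω, X q ω ∂P) = t * (-δ) := by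
      rw [← hmean, Finset.mul_sum]
      exact Finset.sum_congr rfl fun q _ => by ring
    have e2 : ∑ q ∈ S, (t * c q) ^ 2 / 8 = t ^ 2 * V / 8 := by
      rw [← hV, Finset.mul_sum, Finset.sum_div]
      exact Finset.sum_congr rfl fun q _ => by ring
    rw [e1, e2]
  have hfinal : Real.exp (t * (-δ) + t ^ 2 * V / 8) = Real.exp (-2 * δ ^ 2 / V) := by
    congr 1
    rw [ht]
    field_simp
    ring
  calc (P {ω | 0 ≤ ∑ q ∈ S, c q * X q ω}).toReal
      ≤ Real.exp (-t * 0) * mgf (∑ q ∈ S, W q) P t := hch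
  _ = mgf (∑ q ∈ S, W q) P t := by simp
  _ ≤ Real.exp (-2 * δ ^ 2 / V) := by
      rw [hmgf, ← hfinal, ← hprodexp]; exact hprod

lemma cmes_sum_range_ite {Nmax n : ℕ} (hn : n ≤ Nmax) (c : ℝ) (f : ℕ → ℝ) :
    ∑ i ∈ Finset.range Nmax, (if i < n then c else 0) * f i
      = c * ∑ i ∈ Finset.range n, f i := by
  rw [Finset.mul_sum, ← Finset.sum_subset (Finset.range_subset_range.mpr hn)]
  · exact Finset.sum_congr rfl fun i hi => by
      rw [if_pos (Finset.mem_range.mp hi)]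
  · intro i _ hi
    rw [if_neg (fun h => hi (Finset.mem_range.mpr h)), zero_mul]

lemma cmes_inner_sum_eq {L : ℕ} (p : Fin L → ℝ) (w : Fin 2 → Fin L → ℝ)
    (Nf : Fin 2 → Fin L → ℕ) (Nmax : ℕ) (hNmax : ∀ t l, Nf t l ≤ Nmax)
    (f : Fin 2 → Fin L → ℕ → ℝ) :
    ∑ t : Fin 2, ∑ l : Fin L, ∑ i ∈ Finset.range Nmax,
        (if i < Nf t l then p l * w t l / (Nf t l : ℝ) else 0) * f t l i
      = ∑ l, p l * (w 0 l * ((Nf 0 l : ℝ)⁻¹ * ∑ i ∈ Finset.range (Nf 0 l), f 0 l i)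
          + w 1 l * ((Nf 1 l : ℝ)⁻¹ * ∑ i ∈ Finset.range (Nf 1 l), f 1 l i)) := by
  have key : ∀ t l, ∑ i ∈ Finset.range Nmax,
      (if i < Nf t l then p l * w t l / (Nf t l : ℝ) else 0) * f t l i
      = p l * (w t l * ((Nf t l : ℝ)⁻¹ * ∑ i ∈ Finset.range (Nf t l), f t l i)) := by
    intro t l
    rw [cmes_sum_range_ite (hNmax t l)]
    ring
  rw [Fin.sum_univ_two]
  rw [← Finset.sum_add_distrib]
  refine Finset.sum_congr rfl fun l _ => ?_
  rw [key 0 l, key 1 l]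
  ring

end CMESAux


/-- Under the CMES sampling setup, the expected welfare of the conditional
multinomial empirical success rule satisfies
`U_{M*} − Σ_k exp(−2·Δ_{M*k}² / Σ_l p_l²·(A_{kl}+A_{M*l}))·Δ_{M*k} ≤ u ≤ U_{M*}`. -/
theorem cmes_expected_welfare_bounds
    {Ω : Type*} [MeasurableSpace Ω] (P : Measure Ω) [IsProbabilityMeasure P]
    (L : ℕ) (hL : 1 ≤ L)
    (p : Fin L → ℝ) (hp : ∀ l, 0 ≤ p l) (hpsum : ∑ l, p l = 1)
    (m : ℕ) (hm : 1 ≤ m)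
    (π : Fin m → Fin L → ℝ) (hπ : ∀ k l, π k l ∈ Set.Icc (0 : ℝ) 1)
    (N : Fin m → Fin 2 → Fin L → ℕ) (hN : ∀ k t l, 1 ≤ N k t l)
    (Y : Fin m → Fin 2 → Fin L → ℕ → Ω → ℝ)
    (hmeas : ∀ k t l i, Measurable (Y k t l i))
    (hrange : ∀ k t l i ω, Y k t l i ω ∈ Set.Icc (0 : ℝ) 1)
    (μ : Fin m → Fin 2 → Fin L → ℝ)
    (hmean : ∀ k t l i, ∫ ω, Y k t l i ω ∂P = μ k t l)
    (hident : ∀ k t l i j, P.map (Y k t l i) = P.map (Y k t l j))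
    (hindep : iIndepFun
      (fun q : Fin m × Fin 2 × Fin L × ℕ => Y q.1 q.2.1 q.2.2.1 q.2.2.2) P)
    (Uhat : Fin m → Ω → ℝ)
    (hUhat : ∀ k ω, Uhat k ω
      = ∑ l, p l *
          ((1 - π k l) * ((N k 0 l : ℝ)⁻¹ * ∑ i ∈ Finset.range (N k 0 l), Y k 0 l i ω)
            + π k l * ((N k 1 l : ℝ)⁻¹ * ∑ i ∈ Finset.range (N k 1 l), Y k 1 l i ω)))
    (U : Fin m → ℝ)
    (hU : ∀ k, U k = ∑ l, p l * ((1 - π k l) * μ k 0 l + π k l * μ k 1 l))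
    (A : Fin m → Fin L → ℝ)
    (hA : ∀ k l, A k l = (1 - π k l) ^ 2 / (N k 0 l : ℝ) + (π k l) ^ 2 / (N k 1 l : ℝ))
    (u : ℝ)
    (hu : u = ∑ k, (P {ω | ∀ j, j ≠ k → Uhat j ω < Uhat k ω}).toReal * U k)
    (hties : ∀ j k, j ≠ k → P {ω | Uhat j ω = Uhat k ω} = 0)
    (M : Fin m) (hM : ∀ k, U k ≤ U M) :
    U M - ∑ k, Real.exp (-2 * (U M - U k) ^ 2 / ∑ l, (p l) ^ 2 * (A k l + A M l))
        * (U M - U k) ≤ u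
      ∧ u ≤ U M := by
  classical
  have hN0 : ∀ k t l, (0:ℝ) < (N k t l : ℝ) := fun k t l => by
    exact_mod_cast Nat.lt_of_lt_of_le Nat.zero_lt_one (hN k t l)
  -- weights
  set w : Fin m → Fin 2 → Fin L → ℝ := fun j t l => if t = 0 then 1 - π j l else π j l with hwdef
  have hw0 : ∀ j l, w j 0 l = 1 - π j l := fun j l => if_pos rfl
  have hw1 : ∀ j l, w j 1 l = π j l := fun j l => if_neg (by decide)
  -- measurability of Uhat
  have hUhatfun : ∀ k, Uhat k = fun ω => ∑ l, p l *
      ((1 - π k l) * ((N k 0 l : ℝ)⁻¹ * ∑ i ∈ Finset.range (N k 0 l), Y k 0 l i ω)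
        + π k l * ((N k 1 l : ℝ)⁻¹ * ∑ i ∈ Finset.range (N k 1 l), Y k 1 l i ω)) :=
    fun k => funext (hUhat k)
  have hUm : ∀ k, Measurable (Uhat k) := by
    intro k
    rw [hUhatfun k]
    refine Finset.measurable_sum _ fun l _ => ?_
    refine Measurable.const_mul ?_ _
    refine Measurable.add ?_ ?_ <;>
      exact Measurable.const_mul
        (Measurable.const_mul (Finset.measurable_sum _ fun i _ => hmeas _ _ _ _) _) _
  -- events
  set E : Fin m → Set Ω := fun k => {ω | ∀ j, j ≠ k → Uhat j ω < Uhat k ω} with hE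
  have huE : u = ∑ k, (P (E k)).toReal * U k := hu
  have hEmeas : ∀ k, MeasurableSet (E k) := by
    intro k
    have : E k = ⋂ j, ⋂ (_ : j ≠ k), {ω | Uhat j ω < Uhat k ω} := by
      ext ω; simp [hE, Set.mem_iInter]
    rw [this]
    exact MeasurableSet.iInter fun j => MeasurableSet.iInter fun _ =>
      measurableSet_lt (hUm j) (hUm k)
  have hEdisj : Pairwise (Function.onFun Disjoint E) := by
    intro j k hjk
    rw [Function.onFun, Set.disjoint_left]
    intro ω hωj hωk
    exact lt_asymm (hωj k (Ne.symm hjk)) (hωk j hjk)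
  have hEunion : P (⋃ k, E k) = 1 := by
    rw [← prob_compl_eq_zero_iff (MeasurableSet.iUnion hEmeas)]
    have hsub : (⋃ k, E k)ᶜ ⊆ ⋃ (j : Fin m), ⋃ (k : Fin m), ⋃ (_ : j ≠ k),
        {ω | Uhat j ω = Uhat k ω} := by
      intro ω hω
      simp only [Set.mem_compl_iff, Set.mem_iUnion, not_exists] at hω ⊢
      haveI : Nonempty (Fin m) := ⟨⟨0, by omega⟩⟩
      obtain ⟨k₀, hk₀⟩ := Finite.exists_max (fun k => Uhat k ω)
      have hnk := hω k₀
      simp only [hE, Set.mem_setOf_eq, not_forall] at hnk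
      obtain ⟨j, hj, hle⟩ := hnk
      exact ⟨j, k₀, hj, le_antisymm (hk₀ j) (not_lt.mp hle)⟩
    refine measure_mono_null hsub ?_
    exact measure_iUnion_null fun j => measure_iUnion_null fun k =>
      measure_iUnion_null fun hjk => hties j k hjk
  have hsumPE : ∑ k, (P (E k)).toReal = 1 := by
    have h1 : ∑' k, P (E k) = 1 := by rw [← measure_iUnion hEdisj hEmeas, hEunion]
    rw [tsum_fintype] at h1
    have h2 := congrArg ENNReal.toReal h1
    rw [ENNReal.toReal_sum (fun k _ => measure_ne_top P _)] at h2
    simpa using h2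
  have hdiff : U M - u = ∑ k, (P (E k)).toReal * (U M - U k) := by
    have hUM : U M = ∑ k, (P (E k)).toReal * U M := by
      rw [← Finset.sum_mul, hsumPE, one_mul]
    rw [huE]
    conv_lhs => rw [hUM]
    rw [← Finset.sum_sub_distrib]
    exact Finset.sum_congr rfl fun k _ => by ring
  -- the per-k bound
  have hkey : ∀ k, (P (E k)).toReal * (U M - U k)
      ≤ Real.exp (-2 * (U M - U k) ^ 2 / ∑ l, (p l) ^ 2 * (A k l + A M l)) * (U M - U k) := by
    intro k
    rcases eq_or_lt_of_le (hM k) with hΔeq | hΔ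
    · rw [← hΔeq]; simp
    · have hkM : k ≠ M := fun h => by rw [h] at hΔ; exact lt_irrefl _ hΔ
      have hΔpos : 0 < U M - U k := by linarith
      set V := ∑ l, (p l) ^ 2 * (A k l + A M l) with hVdef
      have hApos : ∀ j l, 0 < A j l := by
        intro j l
        rw [hA]
        rcases eq_or_lt_of_le (hπ j l).2 with h1 | h1
        · have h2 : 0 < (π j l) ^ 2 / (N j 1 l : ℝ) := by
            rw [h1]; exact div_pos (by norm_num) (hN0 j 1 l)
          have h3 : 0 ≤ (1 - π j l) ^ 2 / (N j 0 l : ℝ) := by positivity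
          linarith
        · have h2 : 0 < (1 - π j l) ^ 2 / (N j 0 l : ℝ) := by
            have : 0 < (1 - π j l) ^ 2 := by nlinarith
            exact div_pos this (hN0 j 0 l)
          have h3 : 0 ≤ (π j l) ^ 2 / (N j 1 l : ℝ) := by positivity
          linarith
      have hVpos : 0 < V := by
        obtain ⟨l₀, hl₀⟩ : ∃ l, 0 < p l := by
          by_contra h
          push_neg at h
          have : ∑ l, p l ≤ 0 := Finset.sum_nonpos fun l _ => h l
          linarith
        refine Finset.sum_pos'
          (fun l _ => mul_nonneg (sq_nonneg _) (add_pos (hApos k l) (hApos M l)).le)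
          ⟨l₀, Finset.mem_univ _, mul_pos (pow_pos hl₀ 2) (add_pos (hApos k l₀) (hApos M l₀))⟩
      -- index bookkeeping
      set Nmax : ℕ := ∑ t : Fin 2, ∑ l, (N k t l + N M t l) with hNmaxdef
      have hNlek : ∀ (t : Fin 2) (l : Fin L), N k t l ≤ Nmax := by
        intro t l
        calc N k t l ≤ N k t l + N M t l := Nat.le_add_right _ _
        _ ≤ ∑ l', (N k t l' + N M t l') :=
            Finset.single_le_sum (f := fun l' => N k t l' + N M t l')
              (fun l' _ => Nat.zero_le _) (Finset.mem_univ l)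
        _ ≤ Nmax := Finset.single_le_sum
            (f := fun t' => ∑ l', (N k t' l' + N M t' l'))
            (fun t' _ => Nat.zero_le _) (Finset.mem_univ t)
      have hNleM : ∀ (t : Fin 2) (l : Fin L), N M t l ≤ Nmax := by
        intro t l
        calc N M t l ≤ N k t l + N M t l := Nat.le_add_left _ _
        _ ≤ ∑ l', (N k t l' + N M t l') :=
            Finset.single_le_sum (f := fun l' => N k t l' + N M t l')
              (fun l' _ => Nat.zero_le _) (Finset.mem_univ l)
        _ ≤ Nmax := Finset.single_le_sum
            (f := fun t' => ∑ l', (N k t' l' + N M t' l'))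
            (fun t' _ => Nat.zero_le _) (Finset.mem_univ t)
      have hMk : M ≠ k := Ne.symm hkM
      set c : Fin m × Fin 2 × Fin L × ℕ → ℝ := fun q =>
        (if q.1 = k then 1 else if q.1 = M then -1 else 0) *
        (if q.2.2.2 < N q.1 q.2.1 q.2.2.1
          then p q.2.2.1 * w q.1 q.2.1 q.2.2.1 / (N q.1 q.2.1 q.2.2.1 : ℝ) else 0) with hcdef
      set S : Finset (Fin m × Fin 2 × Fin L × ℕ) :=
        ({k, M} : Finset (Fin m)) ×ˢ ((Finset.univ : Finset (Fin 2))
          ×ˢ ((Finset.univ : Finset (Fin L)) ×ˢ Finset.range Nmax)) with hSdef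
      have hck : ∀ (t : Fin 2) (l : Fin L) (i : ℕ), c (k, t, l, i)
          = (if i < N k t l then p l * w k t l / (N k t l : ℝ) else 0) := by
        intro t l i
        show (if (k : Fin m) = k then (1:ℝ) else if k = M then -1 else 0)
            * (if i < N k t l then p l * w k t l / (N k t l : ℝ) else 0) = _
        rw [if_pos rfl, one_mul]
      have hcM : ∀ (t : Fin 2) (l : Fin L) (i : ℕ), c (M, t, l, i)
          = -(if i < N M t l then p l * w M t l / (N M t l : ℝ) else 0) := by
        intro t l i
        show (if (M : Fin m) = k then (1:ℝ) else if M = M then -1 else 0)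
            * (if i < N M t l then p l * w M t l / (N M t l : ℝ) else 0) = _
        rw [if_neg hMk, if_pos rfl, neg_one_mul]
      have hsumG : ∀ G : Fin m → Fin 2 → Fin L → ℕ → ℝ,
          ∑ q ∈ S, c q * G q.1 q.2.1 q.2.2.1 q.2.2.2
          = (∑ l, p l *
              (w k 0 l * ((N k 0 l : ℝ)⁻¹ * ∑ i ∈ Finset.range (N k 0 l), G k 0 l i)
              + w k 1 l * ((N k 1 l : ℝ)⁻¹ * ∑ i ∈ Finset.range (N k 1 l), G k 1 l i)))
            - (∑ l, p l *
              (w M 0 l * ((N M 0 l : ℝ)⁻¹ * ∑ i ∈ Finset.range (N M 0 l), G M 0 l i)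
              + w M 1 l * ((N M 1 l : ℝ)⁻¹ * ∑ i ∈ Finset.range (N M 1 l), G M 1 l i))) := by
        intro G
        calc ∑ q ∈ S, c q * G q.1 q.2.1 q.2.2.1 q.2.2.2
            = ∑ j ∈ ({k, M} : Finset (Fin m)), ∑ t : Fin 2, ∑ l : Fin L,
                ∑ i ∈ Finset.range Nmax, c (j, t, l, i) * G j t l i := by
              rw [hSdef, Finset.sum_product]
              refine Finset.sum_congr rfl fun j _ => ?_
              rw [Finset.sum_product]
              refine Finset.sum_congr rfl fun t _ => ?_
              rw [Finset.sum_product]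
        _ = (∑ t : Fin 2, ∑ l : Fin L, ∑ i ∈ Finset.range Nmax,
              (if i < N k t l then p l * w k t l / (N k t l : ℝ) else 0) * G k t l i)
            + (∑ t : Fin 2, ∑ l : Fin L, ∑ i ∈ Finset.range Nmax,
              (-(if i < N M t l then p l * w M t l / (N M t l : ℝ) else 0)) * G M t l i) := by
              rw [Finset.sum_pair hkM]
              congr 1
              · exact Finset.sum_congr rfl fun t _ => Finset.sum_congr rfl fun l _ =>
                  Finset.sum_congr rfl fun i _ => by rw [hck]
              · exact Finset.sum_congr rfl fun t _ => Finset.sum_congr rfl fun l _ =>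
                  Finset.sum_congr rfl fun i _ => by rw [hcM]
        _ = (∑ t : Fin 2, ∑ l : Fin L, ∑ i ∈ Finset.range Nmax,
              (if i < N k t l then p l * w k t l / (N k t l : ℝ) else 0) * G k t l i)
            - (∑ t : Fin 2, ∑ l : Fin L, ∑ i ∈ Finset.range Nmax,
              (if i < N M t l then p l * w M t l / (N M t l : ℝ) else 0) * G M t l i) := by
              rw [sub_eq_add_neg]
              congr 1
              rw [← Finset.sum_neg_distrib]
              refine Finset.sum_congr rfl fun t _ => ?_
              rw [← Finset.sum_neg_distrib]
              refine Finset.sum_congr rfl fun l _ => ?_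
              rw [← Finset.sum_neg_distrib]
              exact Finset.sum_congr rfl fun i _ => neg_mul _ _
        _ = _ := by
              rw [cmes_inner_sum_eq p (w k) (N k) Nmax hNlek (G k),
                cmes_inner_sum_eq p (w M) (N M) Nmax hNleM (G M)]
      have hZeq : ∀ ω, ∑ q ∈ S, c q * Y q.1 q.2.1 q.2.2.1 q.2.2.2 ω
          = Uhat k ω - Uhat M ω := by
        intro ω
        rw [hsumG (fun j t l i => Y j t l i ω), hUhat k ω, hUhat M ω]
        simp only [hw0, hw1]
      have hconst : ∀ (j : Fin m) (t : Fin 2) (l : Fin L),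
          (N j t l : ℝ)⁻¹ * ∑ _i ∈ Finset.range (N j t l), μ j t l = μ j t l := by
        intro j t l
        rw [Finset.sum_const, Finset.card_range, nsmul_eq_mul]
        have := (hN0 j t l).ne'
        field_simp
      have hmean' : ∑ q ∈ S, c q * ∫ ω, Y q.1 q.2.1 q.2.2.1 q.2.2.2 ω ∂P
          = -(U M - U k) := by
        calc ∑ q ∈ S, c q * ∫ ω, Y q.1 q.2.1 q.2.2.1 q.2.2.2 ω ∂P
            = ∑ q ∈ S, c q * μ q.1 q.2.1 q.2.2.1 :=
              Finset.sum_congr rfl fun q _ => by rw [hmean]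
        _ = U k - U M := by
            rw [hsumG (fun j t l _ => μ j t l), hU k, hU M]
            simp only [hconst, hw0, hw1]
        _ = -(U M - U k) := by ring
      have hkin : ∀ (t : Fin 2) (l : Fin L),
          (N k t l : ℝ)⁻¹ * ∑ i ∈ Finset.range (N k t l), c (k, t, l, i)
          = p l * w k t l / (N k t l : ℝ) := by
        intro t l
        have h' : ∀ i ∈ Finset.range (N k t l),
            c (k, t, l, i) = p l * w k t l / (N k t l : ℝ) := fun i hi => by
          rw [hck, if_pos (Finset.mem_range.mp hi)]
        rw [Finset.sum_congr rfl h', Finset.sum_const, Finset.card_range, nsmul_eq_mul]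
        have := (hN0 k t l).ne'
        field_simp
      have hMin : ∀ (t : Fin 2) (l : Fin L),
          (N M t l : ℝ)⁻¹ * ∑ i ∈ Finset.range (N M t l), c (M, t, l, i)
          = -(p l * w M t l / (N M t l : ℝ)) := by
        intro t l
        have h' : ∀ i ∈ Finset.range (N M t l),
            c (M, t, l, i) = -(p l * w M t l / (N M t l : ℝ)) := fun i hi => by
          rw [hcM, if_pos (Finset.mem_range.mp hi)]
        rw [Finset.sum_congr rfl h', Finset.sum_const, Finset.card_range, nsmul_eq_mul]
        have := (hN0 M t l).ne'
        field_simp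
      have hVsum : ∑ q ∈ S, (c q) ^ 2 = V := by
        have hsq : ∀ q ∈ S, (c q) ^ 2 = c q * c (q.1, q.2.1, q.2.2.1, q.2.2.2) :=
          fun q _ => by rw [sq]
        rw [Finset.sum_congr rfl hsq, hsumG (fun j t l i => c (j, t, l, i))]
        simp only [hkin, hMin]
        rw [hVdef, ← Finset.sum_sub_distrib]
        refine Finset.sum_congr rfl fun l _ => ?_
        rw [hA, hA, hw0, hw1, hw0, hw1]
        have h0k := (hN0 k 0 l).ne'
        have h1k := (hN0 k 1 l).ne'
        have h0M := (hN0 M 0 l).ne'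
        have h1M := (hN0 M 1 l).ne'
        field_simp
        ring
      have htail := cmes_hoeff_sum (P := P) (fun q => Y q.1 q.2.1 q.2.2.1 q.2.2.2) hindep
        (fun q => hmeas _ _ _ _) (fun q ω => hrange _ _ _ _ ω) S c (U M - U k) V hΔpos
        hmean' hVsum hVpos
      have hsub : E k ⊆ {ω | 0 ≤ ∑ q ∈ S, c q * Y q.1 q.2.1 q.2.2.1 q.2.2.2 ω} := by
        intro ω hω
        have h1 : Uhat M ω < Uhat k ω := hω M hMk
        have h2 := hZeq ω
        simp only [Set.mem_setOf_eq]
        rw [h2]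
        linarith
      have hPE : (P (E k)).toReal ≤ Real.exp (-2 * (U M - U k) ^ 2 / V) :=
        le_trans (ENNReal.toReal_mono (measure_ne_top P _) (measure_mono hsub)) htail
      exact mul_le_mul_of_nonneg_right hPE hΔpos.le
  constructor
  · have h1 : U M - u ≤ ∑ k, Real.exp (-2 * (U M - U k) ^ 2
        / ∑ l, (p l) ^ 2 * (A k l + A M l)) * (U M - U k) := by
      rw [hdiff]
      exact Finset.sum_le_sum fun k _ => hkey k
    linarith
  · have h2 : 0 ≤ U M - u := by
      rw [hdiff]
      exact Finset.sum_nonneg fun k _ =>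
        mul_nonneg ENNReal.toReal_nonneg (by linarith [hM k])
    linarith
end

section
/- Under the CMES sampling setup with two indices k and M satisfying U_M ≥ U_k and Δ := U_M − U_k, the deviation probability satisfies P(Û_k − Û_M ≥ 0) ≤ exp(−2·Δ² / {Σ_{l=1}^{L} p_l²·(A_{kl} + A_{Ml})}). -/
open MeasureTheory ProbabilityTheory Finset

section CMESAux
open Real

open Real

lemma hoeffding_sq_aux (x H : ℝ) (hH : 0 < H) : 0 ≤ 1 / 4 - (x * H - x * x) / H ^ 2 := by
  rw [sub_nonneg, div_le_iff₀ (pow_pos hH 2)]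
  nlinarith [sq_nonneg (H - 2 * x)]

lemma hoeffding_pos_aux {p : ℝ} (hp0 : 0 ≤ p) (hp1 : p ≤ 1) (v : ℝ) :
    0 < 1 - p + p * Real.exp v := by
  rcases eq_or_lt_of_le hp1 with hp | hp
  · rw [hp]; simpa using Real.exp_pos v
  · have := mul_nonneg hp0 (Real.exp_pos v).le
    linarith

lemma hoeffding_log_ineq {p : ℝ} (hp0 : 0 ≤ p) (hp1 : p ≤ 1) (u : ℝ) :
    Real.log (1 - p + p * Real.exp u) ≤ p * u + u ^ 2 / 8 := by
  have hpos : ∀ v : ℝ, 0 < 1 - p + p * Real.exp v := hoeffding_pos_aux hp0 hp1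
  set h : ℝ → ℝ := fun v => 1 - p + p * Real.exp v with hh
  set F : ℝ → ℝ := fun v => p * v + v ^ 2 / 8 - Real.log (h v) with hF
  set G : ℝ → ℝ := fun v => p + v / 4 - p * Real.exp v / h v with hG
  have hderh : ∀ v, HasDerivAt h (p * Real.exp v) v := by
    intro v
    exact ((Real.hasDerivAt_exp v).const_mul p).const_add (1 - p)
  have hder : ∀ v, HasDerivAt F (G v) v := by
    intro v
    have h2 : HasDerivAt (fun w => Real.log (h w)) (p * Real.exp v / h v) v :=
      (hderh v).log (hpos v).ne'
    have h3 : HasDerivAt (fun w : ℝ => p * w + w ^ 2 / 8) (p + v / 4) v := by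
      have h4 : HasDerivAt (fun w : ℝ => w ^ 2) (2 * v) v := by
        simpa using hasDerivAt_pow 2 v
      have h5 := ((hasDerivAt_id v).const_mul p).add (h4.div_const 8)
      exact h5.congr_deriv (by ring)
    exact h3.sub h2
  have hderG : ∀ v, HasDerivAt G
      (1 / 4 - (p * Real.exp v * h v - p * Real.exp v * (p * Real.exp v)) / (h v) ^ 2) v := by
    intro v
    have h2 : HasDerivAt (fun w => p * Real.exp w) (p * Real.exp v) v :=
      (Real.hasDerivAt_exp v).const_mul p
    have h3 := h2.div (hderh v) (hpos v).ne'
    have h4 : HasDerivAt (fun w : ℝ => p + w / 4) (1 / 4) v := by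
      simpa using ((hasDerivAt_id v).div_const 4).const_add p
    exact h4.sub h3
  have hGmono : Monotone G := by
    have hdiff : Differentiable ℝ G := fun v => (hderG v).differentiableAt
    refine monotone_of_deriv_nonneg hdiff ?_
    intro v
    rw [(hderG v).deriv]
    exact hoeffding_sq_aux (p * Real.exp v) (h v) (hpos v)
  have hG0 : G 0 = 0 := by
    simp only [hG, Real.exp_zero, mul_one]
    have h1 : h 0 = 1 := by simp [hh]
    rw [h1]; ring
  have hFdiff : Differentiable ℝ F := fun v => (hder v).differentiableAt
  have hmonoF : MonotoneOn F (Set.Ici 0) := by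
    refine monotoneOn_of_deriv_nonneg (convex_Ici 0) hFdiff.continuous.continuousOn
      hFdiff.differentiableOn ?_
    intro x hx
    rw [interior_Ici] at hx
    rw [(hder x).deriv]
    have := hGmono (le_of_lt hx)
    rwa [hG0] at this
  have hantiF : AntitoneOn F (Set.Iic 0) := by
    refine antitoneOn_of_deriv_nonpos (convex_Iic 0) hFdiff.continuous.continuousOn
      hFdiff.differentiableOn ?_
    intro x hx
    rw [interior_Iic] at hx
    rw [(hder x).deriv]
    have := hGmono (le_of_lt hx)
    rwa [hG0] at this
  have hF0 : F 0 = 0 := by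
    have h1 : h 0 = 1 := by simp [hh]
    simp only [hF, h1, mul_zero, Real.log_one]
    norm_num
  have hFnn : 0 ≤ F u := by
    rcases le_total 0 u with hu | hu
    · have := hmonoF Set.self_mem_Ici hu hu
      rwa [hF0] at this
    · have := hantiF hu Set.self_mem_Iic hu
      rwa [hF0] at this
  simp only [hF] at hFnn
  linarith

lemma hoeffding_exp_ineq {p : ℝ} (hp0 : 0 ≤ p) (hp1 : p ≤ 1) (u : ℝ) :
    1 - p + p * Real.exp u ≤ Real.exp (p * u + u ^ 2 / 8) := by
  calc 1 - p + p * Real.exp u = Real.exp (Real.log (1 - p + p * Real.exp u)) :=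
        (Real.exp_log (hoeffding_pos_aux hp0 hp1 u)).symm
    _ ≤ _ := Real.exp_le_exp.mpr (hoeffding_log_ineq hp0 hp1 u)


lemma integrable_of_bounded' {Ω : Type*} [MeasurableSpace Ω] {P : Measure Ω}
    [IsProbabilityMeasure P] {X : Ω → ℝ} (hm : Measurable X) (C : ℝ)
    (h : ∀ ω, |X ω| ≤ C) : Integrable X P :=
  (integrable_const C).mono' hm.aestronglyMeasurable (Filter.Eventually.of_forall h)

lemma mgf_le_of_mem_Icc {Ω : Type*} [MeasurableSpace Ω] {P : Measure Ω}
    [IsProbabilityMeasure P] {X : Ω → ℝ} (hm : Measurable X) {a b : ℝ} (hab : a ≤ b)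
    (hX : ∀ ω, X ω ∈ Set.Icc a b) (t : ℝ) :
    mgf X P t ≤ Real.exp (t * (∫ ω, X ω ∂P) + t ^ 2 * (b - a) ^ 2 / 8) := by
  have hint : Integrable X P := by
    refine integrable_of_bounded' hm (|a| + |b|) fun ω => ?_
    have h1 := (hX ω).1; have h2 := (hX ω).2
    have := neg_abs_le a; have := le_abs_self b
    have := abs_nonneg a; have := abs_nonneg b
    rw [abs_le]; constructor <;> linarith
  set μx := ∫ ω, X ω ∂P with hμx
  have hμxa : a ≤ μx := by
    have := integral_mono (integrable_const a) hint (fun ω => (hX ω).1)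
    simpa using this
  have hμxb : μx ≤ b := by
    have := integral_mono hint (integrable_const b) (fun ω => (hX ω).2)
    simpa using this
  rcases eq_or_lt_of_le hab with heq | hlt
  · have hXa : X = fun _ => a := funext fun ω => le_antisymm ((hX ω).2.trans heq.ge) (hX ω).1
    have hμa : μx = a := by rw [hμx, hXa]; simp
    rw [hXa, mgf_const, hμa, ← heq]
    simp
  · have hba : (0:ℝ) < b - a := sub_pos.mpr hlt
    set q : ℝ := (μx - a) / (b - a) with hq
    have hq0 : 0 ≤ q := div_nonneg (by linarith) hba.le
    have hq1 : q ≤ 1 := (div_le_one hba).mpr (by linarith)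
    have hpt : ∀ ω, Real.exp (t * X ω) ≤
        (b - X ω) / (b - a) * Real.exp (t * a) + (X ω - a) / (b - a) * Real.exp (t * b) := by
      intro ω
      have h1 := (hX ω).1; have h2 := (hX ω).2
      have hθ0 : 0 ≤ (b - X ω) / (b - a) := div_nonneg (by linarith) hba.le
      have hθ1 : 0 ≤ (X ω - a) / (b - a) := div_nonneg (by linarith) hba.le
      have hsum : (b - X ω) / (b - a) + (X ω - a) / (b - a) = 1 := by
        field_simp
        ring
      have := convexOn_exp.2 (Set.mem_univ (t * a)) (Set.mem_univ (t * b)) hθ0 hθ1 hsum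
      simp only [smul_eq_mul] at this
      have harg : (b - X ω) / (b - a) * (t * a) + (X ω - a) / (b - a) * (t * b) = t * X ω := by
        field_simp; ring
      rwa [harg] at this
    have hintexp : Integrable (fun ω => Real.exp (t * X ω)) P := by
      refine integrable_of_bounded' ((hm.const_mul t).exp) (Real.exp (|t| * (|a| + |b|)))
        fun ω => ?_
      rw [abs_of_nonneg (Real.exp_nonneg _)]
      apply Real.exp_le_exp.mpr
      calc t * X ω ≤ |t * X ω| := le_abs_self _
        _ = |t| * |X ω| := abs_mul t (X ω)
        _ ≤ |t| * (|a| + |b|) := by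
            apply mul_le_mul_of_nonneg_left _ (abs_nonneg t)
            have h1 := (hX ω).1; have h2 := (hX ω).2
            have := neg_abs_le a; have := le_abs_self b
            have := abs_nonneg a; have := abs_nonneg b
            rw [abs_le]; constructor <;> linarith
    have hintRHS : Integrable (fun ω => (b - X ω) / (b - a) * Real.exp (t * a)
        + (X ω - a) / (b - a) * Real.exp (t * b)) P := by
      apply Integrable.add
      · exact (((integrable_const b).sub hint).div_const (b - a)).mul_const _
      · exact ((hint.sub (integrable_const a)).div_const (b - a)).mul_const _
    have hrw : (fun ω => (b - X ω) / (b - a) * Real.exp (t * a)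
        + (X ω - a) / (b - a) * Real.exp (t * b))
        = fun ω => (b / (b - a) * Real.exp (t * a) - a / (b - a) * Real.exp (t * b))
          + X ω * (Real.exp (t * b) / (b - a) - Real.exp (t * a) / (b - a)) := by
      funext ω; ring
    have hstep1 : mgf X P t ≤ (b / (b - a) * Real.exp (t * a) - a / (b - a) * Real.exp (t * b))
        + μx * (Real.exp (t * b) / (b - a) - Real.exp (t * a) / (b - a)) := by
      have hmono := integral_mono hintexp hintRHS hpt
      refine le_trans hmono (le_of_eq ?_)
      rw [hrw, integral_add (integrable_const _) (hint.mul_const _), integral_const,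
        integral_mul_const]
      simp [hμx]
    have hstep2 : (b / (b - a) * Real.exp (t * a) - a / (b - a) * Real.exp (t * b))
        + μx * (Real.exp (t * b) / (b - a) - Real.exp (t * a) / (b - a))
        = Real.exp (t * a) * (1 - q + q * Real.exp (t * (b - a))) := by
      have hexp : Real.exp (t * b) = Real.exp (t * a) * Real.exp (t * (b - a)) := by
        rw [← Real.exp_add]; ring_nf
      rw [hexp, hq]
      field_simp
      ring
    have hstep3 : Real.exp (t * a) * (1 - q + q * Real.exp (t * (b - a)))
        ≤ Real.exp (t * a) * Real.exp (q * (t * (b - a)) + (t * (b - a)) ^ 2 / 8) :=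
      mul_le_mul_of_nonneg_left (hoeffding_exp_ineq hq0 hq1 _) (Real.exp_nonneg _)
    have hstep4 : Real.exp (t * a) * Real.exp (q * (t * (b - a)) + (t * (b - a)) ^ 2 / 8)
        = Real.exp (t * μx + t ^ 2 * (b - a) ^ 2 / 8) := by
      rw [← Real.exp_add]
      congr 1
      have hqba : q * (b - a) = μx - a := div_mul_cancel₀ _ hba.ne'
      linear_combination t * hqba
    calc mgf X P t ≤ _ := hstep1
      _ = _ := hstep2
      _ ≤ _ := hstep3
      _ = _ := hstep4


lemma integrable_exp_of_mem_Icc {Ω : Type*} [MeasurableSpace Ω] {P : Measure Ω}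
    [IsProbabilityMeasure P] {X : Ω → ℝ} (hm : Measurable X) {a b : ℝ}
    (hX : ∀ ω, X ω ∈ Set.Icc a b) (t : ℝ) :
    Integrable (fun ω => Real.exp (t * X ω)) P := by
  refine (integrable_const (Real.exp (|t| * (|a| + |b|)))).mono'
    ((hm.const_mul t).exp).aestronglyMeasurable (Filter.Eventually.of_forall fun ω => ?_)
  rw [Real.norm_eq_abs, abs_of_nonneg (Real.exp_nonneg _)]
  apply Real.exp_le_exp.mpr
  calc t * X ω ≤ |t * X ω| := le_abs_self _
    _ = |t| * |X ω| := abs_mul t (X ω)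
    _ ≤ |t| * (|a| + |b|) := by
        apply mul_le_mul_of_nonneg_left _ (abs_nonneg t)
        have h1 := (hX ω).1; have h2 := (hX ω).2
        have := neg_abs_le a; have := le_abs_self b
        have := abs_nonneg a; have := abs_nonneg b
        rw [abs_le]; constructor <;> linarith

lemma hoeffding_tail_bound {Ω : Type*} [MeasurableSpace Ω] (P : Measure Ω)
    [IsProbabilityMeasure P] {ι : Type*} (X : ι → Ω → ℝ)
    (hindep : iIndepFun X P)
    (hmeas : ∀ i, Measurable (X i)) (S : Finset ι) (a b : ι → ℝ)
    (hmem : ∀ i ω, X i ω ∈ Set.Icc (a i) (b i)) (ε t : ℝ) (ht : 0 ≤ t) :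
    (P {ω | ε ≤ (∑ i ∈ S, X i) ω}).toReal ≤
      Real.exp (-(t * ε) + t * (∑ i ∈ S, ∫ ω, X i ω ∂P)
        + t ^ 2 * (∑ i ∈ S, (b i - a i) ^ 2) / 8) := by
  have hΩ : Nonempty Ω := by
    rcases isEmpty_or_nonempty Ω with hE | hNE
    · exfalso
      have h1 : (Set.univ : Set Ω) = ∅ := Set.univ_eq_empty_iff.mpr hE
      have h2 := measure_univ (μ := P)
      rw [h1] at h2; simp at h2
    · exact hNE
  obtain ⟨ω₀⟩ := hΩ
  have hab : ∀ i, a i ≤ b i := fun i => le_trans (hmem i ω₀).1 (hmem i ω₀).2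
  have hintsum : Integrable (fun ω => Real.exp (t * (∑ i ∈ S, X i) ω)) P :=
    hindep.integrable_exp_mul_sum hmeas
      (fun i _ => integrable_exp_of_mem_Icc (hmeas i) (hmem i) t)
  have hchern := measure_ge_le_exp_mul_mgf (μ := P) (X := ∑ i ∈ S, X i) ε ht hintsum
  have hmgf : mgf (∑ i ∈ S, X i) P t = ∏ i ∈ S, mgf (X i) P t := hindep.mgf_sum hmeas S
  have hprod : ∏ i ∈ S, mgf (X i) P t
      ≤ ∏ i ∈ S, Real.exp (t * (∫ ω, X i ω ∂P) + t ^ 2 * (b i - a i) ^ 2 / 8) :=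
    Finset.prod_le_prod (fun i _ => mgf_nonneg)
      (fun i _ => mgf_le_of_mem_Icc (hmeas i) (hab i) (hmem i) t)
  calc (P {ω | ε ≤ (∑ i ∈ S, X i) ω}).toReal
      ≤ Real.exp (-t * ε) * mgf (∑ i ∈ S, X i) P t := hchern
    _ ≤ Real.exp (-t * ε)
        * ∏ i ∈ S, Real.exp (t * (∫ ω, X i ω ∂P) + t ^ 2 * (b i - a i) ^ 2 / 8) := by
        rw [hmgf]
        exact mul_le_mul_of_nonneg_left hprod (Real.exp_nonneg _)
    _ = _ := by
        rw [← Real.exp_sum, ← Real.exp_add]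
        congr 1
        rw [Finset.sum_add_distrib, ← Finset.mul_sum]
        rw [show ∑ i ∈ S, t ^ 2 * (b i - a i) ^ 2 / 8
          = t ^ 2 * (∑ i ∈ S, (b i - a i) ^ 2) / 8 by
            rw [Finset.mul_sum, Finset.sum_div]]
        ring

end CMESAux

/-- Under the CMES sampling setup with two indices `k` and `M` satisfying
`U M ≥ U k` and `Δ := U M − U k`, the deviation probability satisfies
`P(Û_k − Û_M ≥ 0) ≤ exp(−2Δ² / Σ_l p_l²·(A_{kl}+A_{Ml}))`. -/
theorem cmes_hoeffding_deviation_bound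
    {Ω : Type*} [MeasurableSpace Ω] (P : Measure Ω) [IsProbabilityMeasure P]
    (L : ℕ) (hL : 1 ≤ L)
    (p : Fin L → ℝ) (hp : ∀ l, 0 ≤ p l) (hpsum : ∑ l, p l = 1)
    (m : ℕ) (hm : 1 ≤ m)
    (π : Fin m → Fin L → ℝ) (hπ : ∀ k l, π k l ∈ Set.Icc (0 : ℝ) 1)
    (N : Fin m → Fin 2 → Fin L → ℕ) (hN : ∀ k t l, 1 ≤ N k t l)
    (Y : Fin m → Fin 2 → Fin L → ℕ → Ω → ℝ)
    (hmeas : ∀ k t l i, Measurable (Y k t l i))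
    (hrange : ∀ k t l i ω, Y k t l i ω ∈ Set.Icc (0 : ℝ) 1)
    (μ : Fin m → Fin 2 → Fin L → ℝ)
    (hmean : ∀ k t l i, ∫ ω, Y k t l i ω ∂P = μ k t l)
    (hident : ∀ k t l i j, P.map (Y k t l i) = P.map (Y k t l j))
    (hindep : iIndepFun
      (fun q : Fin m × Fin 2 × Fin L × ℕ => Y q.1 q.2.1 q.2.2.1 q.2.2.2) P)
    (Uhat : Fin m → Ω → ℝ)
    (hUhat : ∀ k ω, Uhat k ω
      = ∑ l, p l *
          ((1 - π k l) * ((N k 0 l : ℝ)⁻¹ * ∑ i ∈ Finset.range (N k 0 l), Y k 0 l i ω)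
            + π k l * ((N k 1 l : ℝ)⁻¹ * ∑ i ∈ Finset.range (N k 1 l), Y k 1 l i ω)))
    (U : Fin m → ℝ)
    (hU : ∀ k, U k = ∑ l, p l * ((1 - π k l) * μ k 0 l + π k l * μ k 1 l))
    (A : Fin m → Fin L → ℝ)
    (hA : ∀ k l, A k l = (1 - π k l) ^ 2 / (N k 0 l : ℝ) + (π k l) ^ 2 / (N k 1 l : ℝ))
    (k M : Fin m) (hkM : k ≠ M) (hUM : U k ≤ U M) :
    (P {ω | 0 ≤ Uhat k ω - Uhat M ω}).toReal
      ≤ Real.exp (-2 * (U M - U k) ^ 2 / ∑ l, (p l) ^ 2 * (A k l + A M l)) := by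
  classical
  have hNpos : ∀ j t l, (0:ℝ) < (N j t l : ℝ) := fun j t l => by
    exact_mod_cast Nat.lt_of_lt_of_le Nat.zero_lt_one (hN j t l)
  have hNne : ∀ j t l, (N j t l : ℝ) ≠ 0 := fun j t l => (hNpos j t l).ne'
  set Δ : ℝ := U M - U k with hΔdef
  have hΔ0 : (0:ℝ) ≤ Δ := by rw [hΔdef]; linarith
  set D : ℝ := ∑ l, (p l) ^ 2 * (A k l + A M l) with hD
  have hApos : ∀ j l, 0 < A j l := by
    intro j l
    rw [hA]
    rcases lt_or_eq_of_le (hπ j l).2 with h1 | h1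
    · have h3 : 0 < (1 - π j l) ^ 2 / (N j 0 l : ℝ) :=
        div_pos (by nlinarith) (hNpos j 0 l)
      have h2 : 0 ≤ (π j l) ^ 2 / (N j 1 l : ℝ) := div_nonneg (sq_nonneg _) (hNpos j 1 l).le
      linarith
    · have h3 : 0 < (π j l) ^ 2 / (N j 1 l : ℝ) :=
        div_pos (by rw [h1]; norm_num) (hNpos j 1 l)
      have h2 : 0 ≤ (1 - π j l) ^ 2 / (N j 0 l : ℝ) := div_nonneg (sq_nonneg _) (hNpos j 0 l).le
      linarith
  have hDpos : 0 < D := by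
    obtain ⟨l₀, hl₀⟩ : ∃ l, 0 < p l := by
      by_contra hcon
      push_neg at hcon
      have hz : ∀ l, p l = 0 := fun l => le_antisymm (hcon l) (hp l)
      rw [Finset.sum_congr rfl (fun l _ => hz l)] at hpsum
      simp at hpsum
    rw [hD]
    refine Finset.sum_pos' (fun l _ => mul_nonneg (sq_nonneg _)
      (add_pos (hApos k l) (hApos M l)).le) ⟨l₀, Finset.mem_univ l₀,
      mul_pos (pow_pos hl₀ 2) (add_pos (hApos k l₀) (hApos M l₀))⟩
  -- coefficients and centered variables
  set w : Fin m → Fin 2 → Fin L → ℝ := fun j t l => if t = 0 then 1 - π j l else π j l with hw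
  set c : Fin m × Fin 2 × Fin L × ℕ → ℝ :=
    fun q => (if q.1 = k then 1 else -1)
      * (p q.2.2.1 * w q.1 q.2.1 q.2.2.1 / (N q.1 q.2.1 q.2.2.1 : ℝ)) with hc
  set X : Fin m × Fin 2 × Fin L × ℕ → Ω → ℝ :=
    fun q ω => c q * Y q.1 q.2.1 q.2.2.1 q.2.2.2 ω - c q * μ q.1 q.2.1 q.2.2.1 with hXdef
  have hXmeas : ∀ q, Measurable (X q) := fun q =>
    ((hmeas q.1 q.2.1 q.2.2.1 q.2.2.2).const_mul (c q)).sub_const _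
  have hXindep : iIndepFun X P := by
    have h := hindep.comp (fun q (x : ℝ) => c q * x - c q * μ q.1 q.2.1 q.2.2.1)
      (fun q => (measurable_id.const_mul _).sub_const _)
    exact h
  -- bounds
  set a : Fin m × Fin 2 × Fin L × ℕ → ℝ :=
    fun q => min (c q) 0 - c q * μ q.1 q.2.1 q.2.2.1 with ha
  set b : Fin m × Fin 2 × Fin L × ℕ → ℝ :=
    fun q => max (c q) 0 - c q * μ q.1 q.2.1 q.2.2.1 with hb
  have hmem : ∀ q ω, X q ω ∈ Set.Icc (a q) (b q) := by
    intro q ω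
    have hy := hrange q.1 q.2.1 q.2.2.1 q.2.2.2 ω
    have h1 : min (c q) 0 ≤ c q * Y q.1 q.2.1 q.2.2.1 q.2.2.2 ω := by
      rcases le_total 0 (c q) with h | h
      · exact le_trans (min_le_right _ _) (mul_nonneg h hy.1)
      · exact le_trans (min_le_left _ _) (by nlinarith [hy.2])
    have h2 : c q * Y q.1 q.2.1 q.2.2.1 q.2.2.2 ω ≤ max (c q) 0 := by
      rcases le_total 0 (c q) with h | h
      · exact le_trans (by nlinarith [hy.2]) (le_max_left _ _)
      · exact le_trans (by nlinarith [hy.1]) (le_max_right _ _)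
    exact ⟨sub_le_sub_right h1 _, sub_le_sub_right h2 _⟩
  have hba2 : ∀ q, (b q - a q) ^ 2 = c q ^ 2 := by
    intro q
    have habs : b q - a q = c q ⊔ 0 - c q ⊓ 0 := by rw [hb, ha]; ring
    rcases le_total 0 (c q) with h | h
    · rw [habs, max_eq_left h, min_eq_right h]; ring
    · rw [habs, max_eq_right h, min_eq_left h]; ring
  -- integrability and means
  have hYint : ∀ j t l i, Integrable (Y j t l i) P := by
    intro j t l i
    refine integrable_of_bounded' (hmeas j t l i) 1 fun ω => ?_
    have := hrange j t l i ω
    rw [abs_le]; constructor <;> [linarith [this.1]; exact this.2]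
  have hXmean : ∀ q, ∫ ω, X q ω ∂P = 0 := by
    intro q
    rw [hXdef]
    simp only
    rw [integral_sub ((hYint q.1 q.2.1 q.2.2.1 q.2.2.2).const_mul (c q)) (integrable_const _),
      integral_const_mul, hmean, integral_const]
    simp
  -- the index finset
  set B : ℕ := ∑ j, ∑ t, ∑ l, N j t l with hB
  have hBle : ∀ j t l, N j t l ≤ B := by
    intro j t l
    rw [hB]
    calc N j t l ≤ ∑ l, N j t l := Finset.single_le_sum (fun _ _ => Nat.zero_le _)
          (Finset.mem_univ l)
      _ ≤ ∑ t, ∑ l, N j t l := Finset.single_le_sum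
          (f := fun t => ∑ l, N j t l) (fun _ _ => Nat.zero_le _) (Finset.mem_univ t)
      _ ≤ ∑ j, ∑ t, ∑ l, N j t l := Finset.single_le_sum
          (f := fun j => ∑ t, ∑ l, N j t l) (fun _ _ => Nat.zero_le _) (Finset.mem_univ j)
  set S : Finset (Fin m × Fin 2 × Fin L × ℕ) :=
    (({k, M} : Finset (Fin m)) ×ˢ ((Finset.univ : Finset (Fin 2)) ×ˢ
      ((Finset.univ : Finset (Fin L)) ×ˢ Finset.range B))).filter
      (fun q => q.2.2.2 < N q.1 q.2.1 q.2.2.1) with hS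
  have hfil : ∀ (j : Fin m) (t : Fin 2) (l : Fin L),
      (Finset.range B).filter (fun i => i < N j t l) = Finset.range (N j t l) := by
    intro j t l
    ext i
    simp only [Finset.mem_filter, Finset.mem_range]
    have := hBle j t l
    omega
  have hsum : ∀ f : Fin m × Fin 2 × Fin L × ℕ → ℝ, ∑ q ∈ S, f q
      = (∑ t, ∑ l, ∑ i ∈ Finset.range (N k t l), f (k, t, l, i))
      + (∑ t, ∑ l, ∑ i ∈ Finset.range (N M t l), f (M, t, l, i)) := by
    intro f
    rw [hS, Finset.sum_filter]
    rw [Finset.sum_product, Finset.sum_pair hkM]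
    congr 1 <;>
    · rw [Finset.sum_product]
      refine Finset.sum_congr rfl fun t _ => ?_
      rw [Finset.sum_product]
      refine Finset.sum_congr rfl fun l _ => ?_
      rw [← Finset.sum_filter, hfil]
  -- coefficient values
  have hMk : M ≠ k := Ne.symm hkM
  have hck0 : ∀ (l : Fin L) (i : ℕ), c (k, 0, l, i) = p l * (1 - π k l) / (N k 0 l : ℝ) := by
    intro l i; simp [hc, hw]
  have hck1 : ∀ (l : Fin L) (i : ℕ), c (k, 1, l, i) = p l * π k l / (N k 1 l : ℝ) := by
    intro l i; simp [hc, hw, (by decide : (1 : Fin 2) ≠ 0)]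
  have hcM0 : ∀ (l : Fin L) (i : ℕ), c (M, 0, l, i) = -(p l * (1 - π M l) / (N M 0 l : ℝ)) := by
    intro l i; simp [hc, hw, hMk]
  have hcM1 : ∀ (l : Fin L) (i : ℕ), c (M, 1, l, i) = -(p l * π M l / (N M 1 l : ℝ)) := by
    intro l i; simp [hc, hw, hMk, (by decide : (1 : Fin 2) ≠ 0)]
  -- sum of squared coefficients
  have hc2 : ∑ q ∈ S, c q ^ 2 = D := by
    rw [hsum (fun q => c q ^ 2)]
    have hbk : ∑ t, ∑ l, ∑ i ∈ Finset.range (N k t l), c (k, t, l, i) ^ 2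
        = ∑ l, p l ^ 2 * A k l := by
      rw [Fin.sum_univ_two, ← Finset.sum_add_distrib]
      refine Finset.sum_congr rfl fun l _ => ?_
      simp only [hck0, hck1]
      rw [Finset.sum_const, Finset.card_range, Finset.sum_const, Finset.card_range,
        nsmul_eq_mul, nsmul_eq_mul, hA]
      have h0 := hNne k 0 l; have h1 := hNne k 1 l
      field_simp
    have hbM : ∑ t, ∑ l, ∑ i ∈ Finset.range (N M t l), c (M, t, l, i) ^ 2
        = ∑ l, p l ^ 2 * A M l := by
      rw [Fin.sum_univ_two, ← Finset.sum_add_distrib]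
      refine Finset.sum_congr rfl fun l _ => ?_
      simp only [hcM0, hcM1]
      rw [Finset.sum_const, Finset.card_range, Finset.sum_const, Finset.card_range,
        nsmul_eq_mul, nsmul_eq_mul, hA]
      have h0 := hNne M 0 l; have h1 := hNne M 1 l
      field_simp
    rw [hbk, hbM, hD, ← Finset.sum_add_distrib]
    exact Finset.sum_congr rfl fun l _ => by ring
  -- sum identities
  have h1 : ∀ ω, ∑ q ∈ S, c q * Y q.1 q.2.1 q.2.2.1 q.2.2.2 ω = Uhat k ω - Uhat M ω := by
    intro ω
    rw [hsum (fun q => c q * Y q.1 q.2.1 q.2.2.1 q.2.2.2 ω)]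
    have hbk : ∑ t, ∑ l, ∑ i ∈ Finset.range (N k t l), c (k, t, l, i) * Y k t l i ω
        = Uhat k ω := by
      rw [hUhat k ω, Fin.sum_univ_two, ← Finset.sum_add_distrib]
      refine Finset.sum_congr rfl fun l _ => ?_
      simp only [hck0, hck1]
      rw [← Finset.mul_sum, ← Finset.mul_sum]
      ring
    have hbM : ∑ t, ∑ l, ∑ i ∈ Finset.range (N M t l), c (M, t, l, i) * Y M t l i ω
        = -(Uhat M ω) := by
      rw [hUhat M ω, Fin.sum_univ_two, ← Finset.sum_add_distrib, ← Finset.sum_neg_distrib]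
      refine Finset.sum_congr rfl fun l _ => ?_
      simp only [hcM0, hcM1]
      rw [← Finset.mul_sum, ← Finset.mul_sum]
      ring
    rw [hbk, hbM]
    ring
  have h2 : ∑ q ∈ S, c q * μ q.1 q.2.1 q.2.2.1 = U k - U M := by
    rw [hsum (fun q => c q * μ q.1 q.2.1 q.2.2.1)]
    have hbk : ∑ t, ∑ l, ∑ i ∈ Finset.range (N k t l), c (k, t, l, i) * μ k t l = U k := by
      rw [hU k, Fin.sum_univ_two, ← Finset.sum_add_distrib]
      refine Finset.sum_congr rfl fun l _ => ?_
      simp only [hck0, hck1]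
      rw [Finset.sum_const, Finset.card_range, Finset.sum_const, Finset.card_range,
        nsmul_eq_mul, nsmul_eq_mul]
      have h0 := hNne k 0 l; have h1 := hNne k 1 l
      field_simp
    have hbM : ∑ t, ∑ l, ∑ i ∈ Finset.range (N M t l), c (M, t, l, i) * μ M t l = -(U M) := by
      rw [hU M, Fin.sum_univ_two, ← Finset.sum_add_distrib, ← Finset.sum_neg_distrib]
      refine Finset.sum_congr rfl fun l _ => ?_
      simp only [hcM0, hcM1]
      rw [Finset.sum_const, Finset.card_range, Finset.sum_const, Finset.card_range,
        nsmul_eq_mul, nsmul_eq_mul]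
      have h0 := hNne M 0 l; have h1 := hNne M 1 l
      field_simp
      ring
    rw [hbk, hbM]
    ring
  have hZ : ∀ ω, (∑ q ∈ S, X q) ω = (Uhat k ω - Uhat M ω) - (U k - U M) := by
    intro ω
    rw [Finset.sum_apply]
    calc ∑ q ∈ S, X q ω
        = ∑ q ∈ S, (c q * Y q.1 q.2.1 q.2.2.1 q.2.2.2 ω - c q * μ q.1 q.2.1 q.2.2.1) :=
          Finset.sum_congr rfl fun q _ => rfl
      _ = (∑ q ∈ S, c q * Y q.1 q.2.1 q.2.2.1 q.2.2.2 ω)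
          - ∑ q ∈ S, c q * μ q.1 q.2.1 q.2.2.1 := Finset.sum_sub_distrib _ _
      _ = _ := by rw [h1 ω, h2]
  have hset : {ω | 0 ≤ Uhat k ω - Uhat M ω} = {ω | Δ ≤ (∑ q ∈ S, X q) ω} := by
    ext ω
    simp only [Set.mem_setOf_eq]
    rw [hZ ω, hΔdef]
    constructor <;> intro h <;> linarith
  rw [hset]
  have ht : 0 ≤ 4 * Δ / D := div_nonneg (by linarith) hDpos.le
  have happ := hoeffding_tail_bound P X hXindep hXmeas S a b hmem Δ (4 * Δ / D) ht
  refine le_trans happ (le_of_eq ?_)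
  congr 1
  rw [Finset.sum_eq_zero (fun q _ => hXmean q),
    (Finset.sum_congr rfl fun q _ => hba2 q : ∑ q ∈ S, (b q - a q) ^ 2 = ∑ q ∈ S, c q ^ 2),
    hc2]
  field_simp
  ring
end

section
/- Under the CMES sampling setup, the regret of the conditional multinomial empirical success rule satisfies 0 ≤ U_{M*} − u ≤ (1/2)·e^{−1/2}·Σ_{k≠M*} {Σ_{l=1}^{L} p_l²·(A_{kl} + A_{M*l})}^{1/2}. -/
open MeasureTheory ProbabilityTheory Finset

/-- Cantelli's one-sided inequality. -/
lemma cantelli_aux {Ω : Type*} [MeasurableSpace Ω] (P : Measure Ω) [IsProbabilityMeasure P]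
    {X : Ω → ℝ} (hX : MemLp X 2 P) {t : ℝ} (ht : 0 < t) :
    (P {ω | t ≤ X ω - ∫ ω', X ω' ∂P}).toReal
      ≤ variance X P / (variance X P + t ^ 2) := by
  set m0 : ℝ := ∫ ω', X ω' ∂P with hm0
  set v := variance X P with hv
  have hv0 : 0 ≤ v := variance_nonneg X P
  set s : ℝ := v / t with hs
  have hs0 : 0 ≤ s := div_nonneg hv0 ht.le
  have hint2 : Integrable (fun ω => X ω ^ 2) P := hX.integrable_sq
  have hint1 : Integrable X P := hX.integrable one_le_two
  have hgX : Integrable (fun ω => 2 * (s - m0) * X ω) P := hint1.const_mul _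
  have hg : Integrable (fun ω => 2 * (s - m0) * X ω + (s - m0) ^ 2) P :=
    hgX.add (integrable_const _)
  have hf_int : Integrable (fun ω => (X ω - m0 + s) ^ 2) P := by
    have : (fun ω => (X ω - m0 + s) ^ 2)
        = fun ω => X ω ^ 2 + (2 * (s - m0) * X ω + (s - m0) ^ 2) := by
      funext ω; ring
    rw [this]
    exact hint2.add hg
  have hIf : ∫ ω, (X ω - m0 + s) ^ 2 ∂P = v + s ^ 2 := by
    have hvd : v = (∫ ω, X ω ^ 2 ∂P) - (∫ ω, X ω ∂P) ^ 2 := variance_eq_sub hX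
    have : ∫ ω, (X ω - m0 + s) ^ 2 ∂P
        = ∫ ω, X ω ^ 2 ∂P + (2 * (s - m0) * ∫ ω, X ω ∂P + (s - m0) ^ 2) := by
      rw [show (fun ω => (X ω - m0 + s) ^ 2)
          = fun ω => X ω ^ 2 + (2 * (s - m0) * X ω + (s - m0) ^ 2) by funext ω; ring]
      rw [integral_add hint2 hg, integral_add hgX (integrable_const _),
        integral_const_mul, integral_const]
      simp
    rw [this, hvd, ← hm0]
    ring
  have hsub : {ω | t ≤ X ω - m0} ⊆ {ω | (t + s) ^ 2 ≤ (X ω - m0 + s) ^ 2} := by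
    intro ω hω
    have h1 : t + s ≤ X ω - m0 + s := by
      have : t ≤ X ω - m0 := hω
      linarith
    have h2 : 0 ≤ t + s := by positivity
    exact pow_le_pow_left₀ h2 h1 2
  have hmarkov := mul_meas_ge_le_integral_of_nonneg
    (Filter.Eventually.of_forall fun ω => sq_nonneg (X ω - m0 + s)) hf_int ((t + s) ^ 2)
  have hmono : (P {ω | t ≤ X ω - m0}).toReal
      ≤ (P {ω | (t + s) ^ 2 ≤ (X ω - m0 + s) ^ 2}).toReal :=
    ENNReal.toReal_mono (measure_ne_top _ _) (measure_mono hsub)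
  have hts : 0 < (t + s) ^ 2 := by positivity
  have key : (t + s) ^ 2 * (P {ω | t ≤ X ω - m0}).toReal ≤ v + s ^ 2 := by
    calc (t + s) ^ 2 * (P {ω | t ≤ X ω - m0}).toReal
        ≤ (t + s) ^ 2 * (P {ω | (t + s) ^ 2 ≤ (X ω - m0 + s) ^ 2}).toReal :=
          mul_le_mul_of_nonneg_left hmono hts.le
      _ ≤ ∫ ω, (X ω - m0 + s) ^ 2 ∂P := hmarkov
      _ = v + s ^ 2 := hIf
  have h1 : (P {ω | t ≤ X ω - m0}).toReal ≤ (v + s ^ 2) / (t + s) ^ 2 :=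
    (le_div_iff₀ hts).2 (by linarith [key])
  refine h1.trans (le_of_eq ?_)
  rw [hs]
  have ht' : t ≠ 0 := ht.ne'
  have hvt : 0 < v + t ^ 2 := by positivity
  field_simp
  ring

set_option maxHeartbeats 1000000 in
/-- Under the CMES sampling setup, the regret of the conditional multinomial
empirical success rule satisfies
`0 ≤ U_{M*} − u ≤ (1/2)·e^{−1/2}·Σ_{k≠M*} (Σ_l p_l²·(A_{kl}+A_{M*l}))^{1/2}`. -/
theorem cmes_regret_bound
    {Ω : Type*} [MeasurableSpace Ω] (P : Measure Ω) [IsProbabilityMeasure P]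
    (L : ℕ) (hL : 1 ≤ L)
    (p : Fin L → ℝ) (hp : ∀ l, 0 ≤ p l) (hpsum : ∑ l, p l = 1)
    (m : ℕ) (hm : 1 ≤ m)
    (π : Fin m → Fin L → ℝ) (hπ : ∀ k l, π k l ∈ Set.Icc (0 : ℝ) 1)
    (N : Fin m → Fin 2 → Fin L → ℕ) (hN : ∀ k t l, 1 ≤ N k t l)
    (Y : Fin m → Fin 2 → Fin L → ℕ → Ω → ℝ)
    (hmeas : ∀ k t l i, Measurable (Y k t l i))
    (hrange : ∀ k t l i ω, Y k t l i ω ∈ Set.Icc (0 : ℝ) 1)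
    (μ : Fin m → Fin 2 → Fin L → ℝ)
    (hmean : ∀ k t l i, ∫ ω, Y k t l i ω ∂P = μ k t l)
    (hident : ∀ k t l i j, P.map (Y k t l i) = P.map (Y k t l j))
    (hindep : iIndepFun
      (fun q : Fin m × Fin 2 × Fin L × ℕ => Y q.1 q.2.1 q.2.2.1 q.2.2.2) P)
    (Uhat : Fin m → Ω → ℝ)
    (hUhat : ∀ k ω, Uhat k ω
      = ∑ l, p l *
          ((1 - π k l) * ((N k 0 l : ℝ)⁻¹ * ∑ i ∈ Finset.range (N k 0 l), Y k 0 l i ω)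
            + π k l * ((N k 1 l : ℝ)⁻¹ * ∑ i ∈ Finset.range (N k 1 l), Y k 1 l i ω)))
    (U : Fin m → ℝ)
    (hU : ∀ k, U k = ∑ l, p l * ((1 - π k l) * μ k 0 l + π k l * μ k 1 l))
    (A : Fin m → Fin L → ℝ)
    (hA : ∀ k l, A k l = (1 - π k l) ^ 2 / (N k 0 l : ℝ) + (π k l) ^ 2 / (N k 1 l : ℝ))
    (u : ℝ)
    (hu : u = ∑ k, (P {ω | ∀ j, j ≠ k → Uhat j ω < Uhat k ω}).toReal * U k)
    (hties : ∀ j k, j ≠ k → P {ω | Uhat j ω = Uhat k ω} = 0)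
    (M : Fin m) (hM : ∀ k, U k ≤ U M) :
    0 ≤ U M - u
      ∧ U M - u ≤ (1 / 2) * Real.exp (-(1 / 2))
          * ∑ k ∈ Finset.univ.erase M, Real.sqrt (∑ l, (p l) ^ 2 * (A k l + A M l)) := by
  classical
  -- basic integrability
  have hY2 : ∀ k t l i, MemLp (Y k t l i) 2 P := fun k t l i =>
    memLp_of_bounded (Filter.Eventually.of_forall (hrange k t l i))
      (hmeas k t l i).aestronglyMeasurable 2
  have hYint : ∀ k t l i, Integrable (Y k t l i) P := fun k t l i =>
    (hY2 k t l i).integrable one_le_two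
  have hNpos : ∀ k t l, (0 : ℝ) < (N k t l : ℝ) := fun k t l => by
    exact_mod_cast (hN k t l)
  have havg : ∀ k t l,
      ∫ ω, (N k t l : ℝ)⁻¹ * ∑ i ∈ Finset.range (N k t l), Y k t l i ω ∂P = μ k t l := by
    intro k t l
    rw [integral_const_mul, integral_finset_sum _ fun i _ => hYint k t l i]
    simp only [hmean]
    rw [Finset.sum_const, Finset.card_range, nsmul_eq_mul,
      inv_mul_cancel_left₀ (hNpos k t l).ne']
  have hSint : ∀ k t l,
      Integrable (fun ω => (N k t l : ℝ)⁻¹ * ∑ i ∈ Finset.range (N k t l), Y k t l i ω) P :=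
    fun k t l => (integrable_finset_sum _ fun i _ => hYint k t l i).const_mul _
  have hSint0 : ∀ (j : Fin m) (l : Fin L), Integrable (fun ω =>
      (1 - π j l) * ((N j 0 l : ℝ)⁻¹ * ∑ i ∈ Finset.range (N j 0 l), Y j 0 l i ω)) P :=
    fun j l => (hSint j 0 l).const_mul _
  have hSint1 : ∀ (j : Fin m) (l : Fin L), Integrable (fun ω =>
      π j l * ((N j 1 l : ℝ)⁻¹ * ∑ i ∈ Finset.range (N j 1 l), Y j 1 l i ω)) P :=
    fun j l => (hSint j 1 l).const_mul _
  have hlint : ∀ (j : Fin m) (l : Fin L), Integrable (fun ω =>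
      (1 - π j l) * ((N j 0 l : ℝ)⁻¹ * ∑ i ∈ Finset.range (N j 0 l), Y j 0 l i ω)
        + π j l * ((N j 1 l : ℝ)⁻¹ * ∑ i ∈ Finset.range (N j 1 l), Y j 1 l i ω)) P :=
    fun j l => (hSint0 j l).add (hSint1 j l)
  have hlint' : ∀ (j : Fin m) (l : Fin L), Integrable (fun ω => p l *
      ((1 - π j l) * ((N j 0 l : ℝ)⁻¹ * ∑ i ∈ Finset.range (N j 0 l), Y j 0 l i ω)
        + π j l * ((N j 1 l : ℝ)⁻¹ * ∑ i ∈ Finset.range (N j 1 l), Y j 1 l i ω))) P :=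
    fun j l => (hlint j l).const_mul _
  have hUfun : ∀ j, Uhat j = fun ω => ∑ l, p l *
      ((1 - π j l) * ((N j 0 l : ℝ)⁻¹ * ∑ i ∈ Finset.range (N j 0 l), Y j 0 l i ω)
        + π j l * ((N j 1 l : ℝ)⁻¹ * ∑ i ∈ Finset.range (N j 1 l), Y j 1 l i ω)) :=
    fun j => funext (hUhat j)
  have hUm : ∀ j, Measurable (Uhat j) := by
    intro j; rw [hUfun j]
    exact Finset.measurable_sum _ fun l _ => measurable_const.mul
      ((measurable_const.mul (measurable_const.mul
          (Finset.measurable_sum _ fun i _ => hmeas j 0 l i))).add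
        (measurable_const.mul (measurable_const.mul
          (Finset.measurable_sum _ fun i _ => hmeas j 1 l i))))
  have hUint : ∀ j, ∫ ω, Uhat j ω ∂P = U j := by
    intro j
    rw [hUfun j, integral_finset_sum _ fun l _ => hlint' j l, hU]
    refine Finset.sum_congr rfl fun l _ => ?_
    have e0 : ∫ ω, (1 - π j l) * ((N j 0 l : ℝ)⁻¹ * ∑ i ∈ Finset.range (N j 0 l), Y j 0 l i ω) ∂P
        = (1 - π j l) * μ j 0 l := by rw [integral_const_mul, havg]
    have e1 : ∫ ω, π j l * ((N j 1 l : ℝ)⁻¹ * ∑ i ∈ Finset.range (N j 1 l), Y j 1 l i ω) ∂P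
        = π j l * μ j 1 l := by rw [integral_const_mul, havg]
    rw [integral_const_mul, integral_add (hSint0 j l) (hSint1 j l), e0, e1]
  -- bounds on Uhat
  have havgb : ∀ k t l ω,
      (N k t l : ℝ)⁻¹ * ∑ i ∈ Finset.range (N k t l), Y k t l i ω ∈ Set.Icc (0 : ℝ) 1 := by
    intro k t l ω
    constructor
    · exact mul_nonneg (inv_nonneg.2 (hNpos k t l).le)
        (Finset.sum_nonneg fun i _ => (hrange k t l i ω).1)
    · have h1 : ∑ i ∈ Finset.range (N k t l), Y k t l i ω ≤ (N k t l : ℝ) := by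
        calc ∑ i ∈ Finset.range (N k t l), Y k t l i ω
            ≤ ∑ _i ∈ Finset.range (N k t l), (1 : ℝ) :=
              Finset.sum_le_sum fun i _ => (hrange k t l i ω).2
          _ = (N k t l : ℝ) := by simp
      calc (N k t l : ℝ)⁻¹ * ∑ i ∈ Finset.range (N k t l), Y k t l i ω
          ≤ (N k t l : ℝ)⁻¹ * (N k t l : ℝ) :=
            mul_le_mul_of_nonneg_left h1 (inv_nonneg.2 (hNpos k t l).le)
        _ = 1 := inv_mul_cancel₀ (hNpos k t l).ne'
  have hUb : ∀ j ω, Uhat j ω ∈ Set.Icc (0 : ℝ) 1 := by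
    intro j ω
    rw [hUhat j ω]
    constructor
    · refine Finset.sum_nonneg fun l _ => mul_nonneg (hp l) (add_nonneg
        (mul_nonneg ?_ (havgb j 0 l ω).1) (mul_nonneg (hπ j l).1 (havgb j 1 l ω).1))
      have := (hπ j l).2; linarith
    · calc (∑ l, p l *
          ((1 - π j l) * ((N j 0 l : ℝ)⁻¹ * ∑ i ∈ Finset.range (N j 0 l), Y j 0 l i ω)
            + π j l * ((N j 1 l : ℝ)⁻¹ * ∑ i ∈ Finset.range (N j 1 l), Y j 1 l i ω)))
          ≤ ∑ l, p l * 1 := by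
            refine Finset.sum_le_sum fun l _ => mul_le_mul_of_nonneg_left ?_ (hp l)
            nlinarith [(hπ j l).1, (hπ j l).2, (havgb j 0 l ω).1, (havgb j 0 l ω).2,
              (havgb j 1 l ω).1, (havgb j 1 l ω).2]
        _ = 1 := by simpa using hpsum
  have hA0 : ∀ (j : Fin m) l, 0 ≤ A j l := fun j l => by
    rw [hA]
    have := hNpos j 0 l
    have := hNpos j 1 l
    positivity
  have hσ0 : ∀ k : Fin m, 0 ≤ ∑ l, p l ^ 2 * (A k l + A M l) := fun k =>
    Finset.sum_nonneg fun l _ => mul_nonneg (sq_nonneg _) (add_nonneg (hA0 k l) (hA0 M l))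
  -- events
  set E : Fin m → Set Ω := fun k => {ω | ∀ j, j ≠ k → Uhat j ω < Uhat k ω} with hE
  have hu' : u = ∑ k, (P (E k)).toReal * U k := hu
  have hEmeas : ∀ k, MeasurableSet (E k) := by
    intro k
    have : E k = ⋂ (j : Fin m), ⋂ (_ : j ≠ k), {ω | Uhat j ω < Uhat k ω} := by
      ext ω; simp [hE, Set.mem_iInter]
    rw [this]
    exact MeasurableSet.iInter fun j => MeasurableSet.iInter fun _ =>
      measurableSet_lt (hUm j) (hUm k)
  have hdisj : Pairwise (Function.onFun Disjoint E) := by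
    intro a b hab
    rw [Function.onFun, Set.disjoint_left]
    intro ω ha hb
    exact lt_asymm (ha b (Ne.symm hab)) (hb a hab)
  have hcover : P (⋃ k, E k) = 1 := by
    rw [← prob_compl_eq_zero_iff (MeasurableSet.iUnion hEmeas)]
    have hsub : (⋃ k, E k)ᶜ ⊆
        ⋃ (j : Fin m), ⋃ (k : Fin m), ⋃ (_ : j ≠ k), {ω | Uhat j ω = Uhat k ω} := by
      intro ω hω
      simp only [Set.mem_compl_iff, Set.mem_iUnion] at hω ⊢
      have hne : (Finset.univ : Finset (Fin m)).Nonempty := ⟨⟨0, hm⟩, Finset.mem_univ _⟩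
      obtain ⟨k0, -, hk0⟩ := Finset.exists_max_image Finset.univ (fun k => Uhat k ω) hne
      have hωk0 : ¬ ω ∈ E k0 := fun h => hω ⟨k0, h⟩
      simp only [hE, Set.mem_setOf_eq, not_forall] at hωk0
      obtain ⟨j, hj, hle⟩ := hωk0
      exact ⟨j, k0, hj, le_antisymm (hk0 j (Finset.mem_univ _)) (not_lt.1 hle)⟩
    refine measure_mono_null hsub ?_
    exact measure_iUnion_null fun j => measure_iUnion_null fun k =>
      measure_iUnion_null fun hjk => hties j k hjk
  have hsum1 : ∑ k, (P (E k)).toReal = 1 := by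
    have h1 : P (⋃ k, E k) = ∑' k, P (E k) := measure_iUnion hdisj hEmeas
    rw [tsum_fintype] at h1
    have h2 : (∑ k, P (E k)) = 1 := by rw [← h1, hcover]
    calc ∑ k, (P (E k)).toReal = (∑ k, P (E k)).toReal :=
          (ENNReal.toReal_sum fun k _ => measure_ne_top P _).symm
      _ = 1 := by rw [h2]; simp
  -- decomposition
  have hdecomp : U M - u = ∑ k ∈ Finset.univ.erase M, (P (E k)).toReal * (U M - U k) := by
    have h1 : U M = ∑ k, (P (E k)).toReal * U M := by rw [← Finset.sum_mul, hsum1, one_mul]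
    have h2 : ∑ k, (P (E k)).toReal * (U M - U k) = U M - u := by
      calc ∑ k, (P (E k)).toReal * (U M - U k)
          = ∑ k, ((P (E k)).toReal * U M - (P (E k)).toReal * U k) :=
            Finset.sum_congr rfl fun k _ => by ring
        _ = (∑ k, (P (E k)).toReal * U M) - ∑ k, (P (E k)).toReal * U k :=
            Finset.sum_sub_distrib _ _
        _ = U M - u := by rw [← h1, hu']
    rw [← h2, ← Finset.add_sum_erase _ _ (Finset.mem_univ M)]
    simp
  -- main per-k bound
  have key : ∀ k : Fin m, k ≠ M → (P (E k)).toReal * (U M - U k)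
      ≤ 1 / 2 * Real.exp (-(1 / 2)) * Real.sqrt (∑ l, p l ^ 2 * (A k l + A M l)) := by
    intro k hkM
    set σ2 := ∑ l, p l ^ 2 * (A k l + A M l) with hσ2def
    have hσ2 : 0 ≤ σ2 := hσ0 k
    have hRHS0 : 0 ≤ 1 / 2 * Real.exp (-(1 / 2)) * Real.sqrt σ2 := by positivity
    set Δ := U M - U k with hΔdef
    have hΔ0 : 0 ≤ Δ := sub_nonneg.2 (hM k)
    rcases eq_or_lt_of_le hΔ0 with hΔ | hΔ
    · rw [← hΔ, mul_zero]; exact hRHS0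
    -- the random variable X
    set X : Ω → ℝ := fun ω => Uhat k ω - Uhat M ω with hXdef
    have hXmeas : Measurable X := (hUm k).sub (hUm M)
    have hX2 : MemLp X 2 P := by
      refine memLp_of_bounded (a := -1) (b := 1)
        (Filter.Eventually.of_forall fun ω => ?_) hXmeas.aestronglyMeasurable 2
      constructor
      · have := (hUb k ω).1; have := (hUb M ω).2; simp only [hXdef]; linarith
      · have := (hUb k ω).2; have := (hUb M ω).1; simp only [hXdef]; linarith
    have hUL2 : ∀ j, Integrable (Uhat j) P := fun j =>
      (memLp_of_bounded (Filter.Eventually.of_forall (hUb j))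
        (hUm j).aestronglyMeasurable 2).integrable one_le_two
    have hXmean : ∫ ω, X ω ∂P = U k - U M := by
      simp only [hXdef]
      rw [integral_sub (hUL2 k) (hUL2 M), hUint, hUint]
    -- representation as a sum of independent variables
    set B : ℕ := Finset.univ.sup (fun q : Fin m × Fin 2 × Fin L => N q.1 q.2.1 q.2.2)
      with hBdef
    have hNB : ∀ j t l, N j t l ≤ B := fun j t l =>
      Finset.le_sup (f := fun q : Fin m × Fin 2 × Fin L => N q.1 q.2.1 q.2.2)
        (Finset.mem_univ (j, t, l))
    set R : Finset (Fin 2 × Fin L × ℕ) := Finset.univ ×ˢ Finset.univ ×ˢ Finset.range B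
      with hRdef
    set coef : Fin m → Fin 2 × Fin L × ℕ → ℝ := fun j r =>
      if r.2.2 < N j r.1 r.2.1 then
        p r.2.1 * (if r.1 = 0 then 1 - π j r.2.1 else π j r.2.1) / (N j r.1 r.2.1 : ℝ)
      else 0 with hcoefdef
    have hinner : ∀ (j : Fin m) (t : Fin 2) (l : Fin L) (f : ℕ → ℝ),
        ∑ i ∈ Finset.range B, (if i < N j t l then f i else 0)
          = ∑ i ∈ Finset.range (N j t l), f i := by
      intro j t l f
      calc ∑ i ∈ Finset.range B, (if i < N j t l then f i else 0)
          = ∑ i ∈ Finset.range B, (if i ∈ Finset.range (N j t l) then f i else 0) :=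
            Finset.sum_congr rfl fun i _ => by simp [Finset.mem_range]
        _ = ∑ i ∈ Finset.range B ∩ Finset.range (N j t l), f i := Finset.sum_ite_mem _ _ _
        _ = ∑ i ∈ Finset.range (N j t l), f i := by
            rw [Finset.inter_eq_right.2 (Finset.range_subset_range.2 (hNB j t l))]
    have hrep : ∀ (j : Fin m) (ω : Ω),
        Uhat j ω = ∑ r ∈ R, coef j r * Y j r.1 r.2.1 r.2.2 ω := by
      intro j ω
      rw [hUhat j ω, hRdef]
      rw [Finset.sum_product]
      simp only [Finset.sum_product]
      rw [Fin.sum_univ_two, ← Finset.sum_add_distrib]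
      refine Finset.sum_congr rfl fun l _ => ?_
      have e0 : ∑ i ∈ Finset.range B, coef j (0, l, i) * Y j 0 l i ω
          = (p l * (1 - π j l) / (N j 0 l : ℝ)) * ∑ i ∈ Finset.range (N j 0 l), Y j 0 l i ω := by
        simp only [hcoefdef, if_pos rfl, ite_mul, zero_mul]
        exact (hinner j 0 l _).trans (Finset.mul_sum _ _ _).symm
      have e1 : ∑ i ∈ Finset.range B, coef j (1, l, i) * Y j 1 l i ω
          = (p l * π j l / (N j 1 l : ℝ)) * ∑ i ∈ Finset.range (N j 1 l), Y j 1 l i ω := by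
        simp only [hcoefdef, if_neg (by decide : ¬ ((1 : Fin 2) = 0)), ite_mul, zero_mul]
        exact (hinner j 1 l _).trans (Finset.mul_sum _ _ _).symm
      rw [e0, e1]
      ring
    have hcsq : ∀ j : Fin m, ∑ r ∈ R, (coef j r) ^ 2 = ∑ l, p l ^ 2 * A j l := by
      intro j
      rw [hRdef]
      rw [Finset.sum_product]
      simp only [Finset.sum_product]
      rw [Fin.sum_univ_two, ← Finset.sum_add_distrib]
      refine Finset.sum_congr rfl fun l _ => ?_
      have e0 : ∑ i ∈ Finset.range B, (coef j (0, l, i)) ^ 2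
          = (N j 0 l : ℝ) * (p l * (1 - π j l) / (N j 0 l : ℝ)) ^ 2 := by
        simp only [hcoefdef, if_pos rfl, if_true, apply_ite (· ^ 2), ne_eq,
          OfNat.ofNat_ne_zero, not_false_eq_true, zero_pow]
        exact (hinner j 0 l _).trans (by
          rw [Finset.sum_const, Finset.card_range, nsmul_eq_mul])
      have e1 : ∑ i ∈ Finset.range B, (coef j (1, l, i)) ^ 2
          = (N j 1 l : ℝ) * (p l * π j l / (N j 1 l : ℝ)) ^ 2 := by
        simp only [hcoefdef, if_neg (by decide : ¬ ((1 : Fin 2) = 0)), apply_ite (· ^ 2),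
          ne_eq, OfNat.ofNat_ne_zero, not_false_eq_true, zero_pow]
        exact (hinner j 1 l _).trans (by
          rw [Finset.sum_const, Finset.card_range, nsmul_eq_mul])
      rw [e0, e1, hA]
      have h0 := (hNpos j 0 l).ne'
      have h1 := (hNpos j 1 l).ne'
      field_simp
    set sgn : Fin m → ℝ := fun j => if j = k then 1 else -1 with hsgn
    set Z : Fin m × Fin 2 × Fin L × ℕ → Ω → ℝ :=
      fun q ω => (sgn q.1 * coef q.1 q.2) * Y q.1 q.2.1 q.2.2.1 q.2.2.2 ω with hZ
    set T : Finset (Fin m × Fin 2 × Fin L × ℕ) := ({k, M} : Finset (Fin m)) ×ˢ R with hT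
    have hk1 : sgn k = 1 := if_pos rfl
    have hM1 : sgn M = -1 := if_neg (Ne.symm hkM)
    have hXsum : X = ∑ q ∈ T, Z q := by
      funext ω
      rw [Finset.sum_apply]
      simp only [hXdef]
      rw [hT, Finset.sum_product, Finset.sum_pair hkM]
      simp only [hZ, hk1, hM1, one_mul, neg_mul, Finset.sum_neg_distrib]
      rw [hrep k ω, hrep M ω]
      ring
    have hZmem : ∀ q ∈ T, MemLp (Z q) 2 P := fun q _ =>
      (hY2 q.1 q.2.1 q.2.2.1 q.2.2.2).const_mul _
    have hZindep : Set.Pairwise ↑T fun q r => IndepFun (Z q) (Z r) P := by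
      intro q _ r _ hqr
      exact (hindep.indepFun hqr).comp (measurable_const_mul _) (measurable_const_mul _)
    have hvar : variance X P = ∑ q ∈ T, variance (Z q) P := by
      rw [hXsum]; exact IndepFun.variance_sum hZmem hZindep
    have hvarY : ∀ q : Fin m × Fin 2 × Fin L × ℕ,
        variance (Y q.1 q.2.1 q.2.2.1 q.2.2.2) P ≤ 1 / 4 := by
      intro q
      have h := variance_le_sq_of_bounded (μ := P) (a := 0) (b := 1)
        (Filter.Eventually.of_forall (fun ω => hrange q.1 q.2.1 q.2.2.1 q.2.2.2 ω))
        (hmeas q.1 q.2.1 q.2.2.1 q.2.2.2).aemeasurable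
      norm_num at h
      linarith
    have hZvar : ∀ q ∈ T, variance (Z q) P ≤ (sgn q.1 * coef q.1 q.2) ^ 2 * (1 / 4) := by
      intro q _
      rw [show Z q = fun ω => (sgn q.1 * coef q.1 q.2) * Y q.1 q.2.1 q.2.2.1 q.2.2.2 ω from rfl,
        variance_const_mul]
      exact mul_le_mul_of_nonneg_left (hvarY q) (sq_nonneg _)
    have hsgn_sq : ∀ j, (sgn j) ^ 2 = 1 := by
      intro j; simp only [hsgn]; split_ifs <;> norm_num
    have hvb : variance X P ≤ 1 / 4 * σ2 := by
      rw [hvar]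
      calc ∑ q ∈ T, variance (Z q) P
          ≤ ∑ q ∈ T, (sgn q.1 * coef q.1 q.2) ^ 2 * (1 / 4) := Finset.sum_le_sum hZvar
        _ = 1 / 4 * ∑ q ∈ T, (coef q.1 q.2) ^ 2 := by
            rw [Finset.mul_sum]
            exact Finset.sum_congr rfl fun q _ => by rw [mul_pow, hsgn_sq]; ring
        _ = 1 / 4 * σ2 := by
            rw [hT, Finset.sum_product, Finset.sum_pair hkM, hcsq k, hcsq M, hσ2def,
              ← Finset.sum_add_distrib]
            congr 1
            exact Finset.sum_congr rfl fun l _ => by ring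
    -- Cantelli
    have hEsub : E k ⊆ {ω | Δ ≤ X ω - ∫ ω', X ω' ∂P} := by
      intro ω hω
      have h1 : Uhat M ω < Uhat k ω := hω M (Ne.symm hkM)
      simp only [Set.mem_setOf_eq]
      rw [hXmean]
      simp only [hXdef, hΔdef]
      linarith
    have hcant := cantelli_aux P hX2 hΔ
    have hPle : (P (E k)).toReal ≤ variance X P / (variance X P + Δ ^ 2) :=
      le_trans (ENNReal.toReal_mono (measure_ne_top _ _) (measure_mono hEsub)) hcant
    set v := variance X P with hvdef
    have hv0 : 0 ≤ v := variance_nonneg _ _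
    have hstep1 : (P (E k)).toReal * Δ ≤ v / (v + Δ ^ 2) * Δ :=
      mul_le_mul_of_nonneg_right hPle hΔ0
    have hstep2 : v / (v + Δ ^ 2) * Δ ≤ Real.sqrt v / 2 := by
      rw [div_mul_eq_mul_div, div_le_div_iff₀ (by positivity) (by norm_num)]
      nlinarith [sq_nonneg (Real.sqrt v - Δ), Real.sq_sqrt hv0, Real.sqrt_nonneg v, hΔ.le]
    have hstep3 : Real.sqrt v ≤ Real.sqrt σ2 / 2 := by
      have h1 : v ≤ σ2 * (1 / 2) ^ 2 := by nlinarith [hvb]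
      calc Real.sqrt v ≤ Real.sqrt (σ2 * (1 / 2) ^ 2) := Real.sqrt_le_sqrt h1
        _ = Real.sqrt σ2 * (1 / 2) := by
            rw [Real.sqrt_mul hσ2, Real.sqrt_sq (by norm_num : (0:ℝ) ≤ 1 / 2)]
        _ = Real.sqrt σ2 / 2 := by ring
    have hexp : (1 : ℝ) / 4 ≤ 1 / 2 * Real.exp (-(1 / 2)) := by
      have h1 : Real.exp (1 / 2) * Real.exp (1 / 2) = Real.exp 1 := by
        rw [← Real.exp_add]; norm_num
      have h2 : Real.exp 1 < 2.7182818286 := Real.exp_one_lt_d9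
      have h3 : Real.exp (1 / 2) ≤ 2 := by nlinarith [Real.exp_pos (1 / 2)]
      have h4 : (1 : ℝ) / 2 ≤ Real.exp (-(1 / 2)) := by
        rw [Real.exp_neg]
        have h5 : (2 : ℝ)⁻¹ ≤ (Real.exp (1 / 2))⁻¹ := inv_anti₀ (Real.exp_pos _) h3
        norm_num at h5 ⊢
        linarith
      linarith
    calc (P (E k)).toReal * Δ ≤ Real.sqrt v / 2 := le_trans hstep1 hstep2
      _ ≤ Real.sqrt σ2 / 2 / 2 := by linarith
      _ = 1 / 4 * Real.sqrt σ2 := by ring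
      _ ≤ 1 / 2 * Real.exp (-(1 / 2)) * Real.sqrt σ2 :=
          mul_le_mul_of_nonneg_right hexp (Real.sqrt_nonneg _)
  constructor
  · rw [hdecomp]
    exact Finset.sum_nonneg fun k _ =>
      mul_nonneg ENNReal.toReal_nonneg (sub_nonneg.2 (hM k))
  · rw [hdecomp, Finset.mul_sum]
    exact Finset.sum_le_sum fun k hk => key k (Finset.ne_of_mem_erase hk)
end

section
/- Let Φ denote the cumulative distribution function of the standard normal distribution, let α ∈ (0,1), and let c := Φ^{-1}(1−α). Then for every measurable function φ: ℝ → [0,1] with ∫ φ dN(0,1) = α, the one-sided threshold test satisfies: for every b > 0, ∫ 1{x > c} dN(b,1) ≥ ∫ φ dN(b,1), and for every b < 0, ∫ 1{x > c} dN(b,1) ≤ ∫ φ dN(b,1). -/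
open MeasureTheory ProbabilityTheory
open scoped NNReal ENNReal

lemma pdf_ratio (b x : ℝ) :
    gaussianPDFReal b 1 x = gaussianPDFReal 0 1 x * Real.exp (b*x - b^2/2) := by
  simp only [gaussianPDFReal, NNReal.coe_one, mul_one, sub_zero]
  rw [mul_assoc, ← Real.exp_add]
  ring_nf

lemma integral_gauss_pdf (μ : ℝ) (g : ℝ → ℝ) :
    ∫ x, g x ∂(gaussianReal μ 1) = ∫ x, g x * gaussianPDFReal μ 1 x := by
  rw [gaussianReal_of_var_ne_zero _ one_ne_zero]
  have h : gaussianPDF μ 1 = fun x => ((gaussianPDFReal μ 1 x).toNNReal : ℝ≥0∞) := rfl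
  rw [h, integral_withDensity_eq_integral_smul
    ((measurable_gaussianPDFReal μ 1).real_toNNReal : Measurable fun x => (gaussianPDFReal μ 1 x).toNNReal)]
  congr 1
  ext x
  simp [NNReal.smul_def, Real.coe_toNNReal _ (gaussianPDFReal_nonneg μ 1 x), mul_comm]

/-- **Neyman–Pearson in the Gaussian location family.** For `α ∈ (0,1)` and
`c = Φ⁻¹(1−α)`, among all randomized tests `φ : ℝ → [0,1]` of size `α` under `N(0,1)`,
the threshold test `1{x > c}` maximizes power against every `b > 0` and minimizes the
rejection probability against every `b < 0`. -/
theorem gaussian_threshold_test_optimality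
    (α : ℝ) (hα : α ∈ Set.Ioo (0 : ℝ) 1) (c : ℝ)
    (hc : ((gaussianReal 0 1) (Set.Iic c)).toReal = 1 - α)
    (φ : ℝ → ℝ) (hφmeas : Measurable φ) (hφrange : ∀ x, φ x ∈ Set.Icc (0 : ℝ) 1)
    (hφsize : ∫ x, φ x ∂(gaussianReal 0 1) = α) :
    (∀ b : ℝ, 0 < b →
        ∫ x, φ x ∂(gaussianReal b 1) ≤ ((gaussianReal b 1) (Set.Ioi c)).toReal)
    ∧ (∀ b : ℝ, b < 0 →
        ((gaussianReal b 1) (Set.Ioi c)).toReal ≤ ∫ x, φ x ∂(gaussianReal b 1)) := by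
  have hmes : MeasurableSet (Set.Ioi c) := measurableSet_Ioi
  set f : ℝ → ℝ := fun x => (Set.Ioi c).indicator 1 x - φ x with hfdef
  have hfmeas : Measurable f := (measurable_one.indicator hmes).sub hφmeas
  have hfb : ∀ x, ‖f x‖ ≤ 1 := by
    intro x
    have h1 := (hφrange x).1; have h2 := (hφrange x).2
    rw [Real.norm_eq_abs, abs_le]
    by_cases hx : x ∈ Set.Ioi c <;>
      simp only [hfdef, Set.indicator_of_mem, Set.indicator_of_notMem, hx, if_true, if_false,
        Set.indicator_apply, Pi.one_apply] <;> constructor <;> linarith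
  -- integrability of φ and the indicator under any gaussian
  have hintφ : ∀ μ : ℝ, Integrable φ (gaussianReal μ 1) := by
    intro μ
    refine (integrable_const (1:ℝ)).mono' hφmeas.aestronglyMeasurable (ae_of_all _ fun x => ?_)
    have h1 := (hφrange x).1; have h2 := (hφrange x).2
    rw [Real.norm_eq_abs, abs_le]; constructor <;> linarith
  have hintind : ∀ μ : ℝ, Integrable ((Set.Ioi c).indicator (1 : ℝ → ℝ)) (gaussianReal μ 1) :=
    fun μ => (integrable_const (1:ℝ)).indicator hmes
  have hintf : ∀ μ : ℝ, Integrable f (gaussianReal μ 1) := fun μ => (hintind μ).sub (hintφ μ)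
  -- size of the threshold test under N(0,1)
  have hIoi0 : ((gaussianReal 0 1) (Set.Ioi c)).toReal = α := by
    rw [← Set.compl_Iic, measure_compl measurableSet_Iic (measure_ne_top _ _), measure_univ,
      ENNReal.toReal_sub_of_le prob_le_one ENNReal.one_ne_top]
    rw [ENNReal.toReal_one, hc]; ring
  have hI0 : ∫ x, f x ∂(gaussianReal 0 1) = 0 := by
    rw [hfdef]
    rw [integral_sub (hintind 0) (hintφ 0), integral_indicator_one hmes, hφsize, measureReal_def, hIoi0, sub_self]
  -- the key sign inequality
  have key : ∀ b : ℝ, 0 ≤ b * ∫ x, f x ∂(gaussianReal b 1) := by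
    intro b
    set r : ℝ := Real.exp (b*c - b^2/2) with hr
    have hintfb : Integrable (fun x => f x * gaussianPDFReal b 1 x) volume :=
      (integrable_gaussianPDFReal b 1).bdd_mul hfmeas.aestronglyMeasurable (ae_of_all _ hfb)
    have hintf0 : Integrable (fun x => f x * gaussianPDFReal 0 1 x) volume :=
      (integrable_gaussianPDFReal 0 1).bdd_mul hfmeas.aestronglyMeasurable (ae_of_all _ hfb)
    have hpt : ∀ x, 0 ≤ b * (f x * (gaussianPDFReal b 1 x - r * gaussianPDFReal 0 1 x)) := by
      intro x
      rw [pdf_ratio]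
      have hp0 := gaussianPDFReal_nonneg 0 1 x
      have heq : b * (f x * (gaussianPDFReal 0 1 x * Real.exp (b*x - b^2/2)
            - r * gaussianPDFReal 0 1 x))
          = (f x * (b * (Real.exp (b*x - b^2/2) - Real.exp (b*c - b^2/2))))
            * gaussianPDFReal 0 1 x := by rw [hr]; ring
      rw [heq]
      refine mul_nonneg ?_ hp0
      rcases le_or_gt x c with hx | hx
      · have hf1 : f x ≤ 0 := by
          have := (hφrange x).1
          simp only [hfdef, Set.indicator_of_notMem (by simpa using hx : x ∉ Set.Ioi c)]
          linarith
        refine mul_nonneg_iff.mpr (Or.inr ⟨hf1, ?_⟩)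
        rcases le_total 0 b with hb | hb
        · have : Real.exp (b*x - b^2/2) ≤ Real.exp (b*c - b^2/2) :=
            Real.exp_le_exp.mpr (by nlinarith)
          exact mul_nonpos_of_nonneg_of_nonpos hb (by linarith)
        · have : Real.exp (b*c - b^2/2) ≤ Real.exp (b*x - b^2/2) :=
            Real.exp_le_exp.mpr (by nlinarith)
          exact mul_nonpos_of_nonpos_of_nonneg hb (by linarith)
      · have hf1 : 0 ≤ f x := by
          have := (hφrange x).2
          simp only [hfdef, Set.indicator_of_mem (Set.mem_Ioi.mpr hx), Pi.one_apply]
          linarith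
        refine mul_nonneg hf1 ?_
        rcases le_total 0 b with hb | hb
        · have : Real.exp (b*c - b^2/2) ≤ Real.exp (b*x - b^2/2) :=
            Real.exp_le_exp.mpr (by nlinarith)
          exact mul_nonneg hb (by linarith)
        · have : Real.exp (b*x - b^2/2) ≤ Real.exp (b*c - b^2/2) :=
            Real.exp_le_exp.mpr (by nlinarith)
          exact mul_nonneg_iff.mpr (Or.inr ⟨hb, by linarith⟩)
    have h : 0 ≤ ∫ x, b * (f x * (gaussianPDFReal b 1 x - r * gaussianPDFReal 0 1 x)) :=
      integral_nonneg hpt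
    have hsplit : ∫ x, b * (f x * (gaussianPDFReal b 1 x - r * gaussianPDFReal 0 1 x))
        = b * ((∫ x, f x * gaussianPDFReal b 1 x) - r * ∫ x, f x * gaussianPDFReal 0 1 x) := by
      rw [integral_const_mul]
      congr 1
      have : ∀ x, f x * (gaussianPDFReal b 1 x - r * gaussianPDFReal 0 1 x)
          = f x * gaussianPDFReal b 1 x - r * (f x * gaussianPDFReal 0 1 x) := by
        intro x; ring
      simp_rw [this]
      rw [integral_sub hintfb (hintf0.const_mul r), integral_const_mul]
    rw [hsplit] at h
    rw [integral_gauss_pdf]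
    have h0 : ∫ x, f x * gaussianPDFReal 0 1 x = 0 := by
      rw [← integral_gauss_pdf, hI0]
    rw [h0, mul_zero, sub_zero] at h
    exact h
  constructor
  · intro b hb
    have h := key b
    have hI : 0 ≤ ∫ x, f x ∂(gaussianReal b 1) := nonneg_of_mul_nonneg_right h hb
    rw [hfdef, integral_sub (hintind b) (hintφ b), integral_indicator_one hmes, measureReal_def] at hI
    linarith
  · intro b hb
    have h := key b
    have hI : ∫ x, f x ∂(gaussianReal b 1) ≤ 0 := by nlinarith
    rw [hfdef, integral_sub (hintind b) (hintφ b), integral_indicator_one hmes, measureReal_def] at hI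
    linarith
end
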